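/- arXiv:2303.06227 — 3 statements merged into one kernel-verified Lean document; each statement's English description precedes it below -/
import Mathlib

section
/- (Theorem 1, almost-sure consistency of the doubly-robust estimator with correctly specified nuisance functions.) Let (Y₀ᵢ, Y₁ᵢ, Gᵢ, Xᵢ)_{i≥1} be an i.i.d. sequence with the same distribution as (Y₀, Y₁, G, X), set ΔYᵢ := Y₁ᵢ − Y₀ᵢ, and let Δμ_N, Δμ_C be versions of E[ΔY ∣ G=N, X] and E[ΔY ∣ G=C, X]. Define φ(y₀, y₁, g, x) := (e_T(x)/p_T)·(1{g=N}/e_N(x))·(y₁ − y₀ − Δμ_N(x)) + (1{g=T}/p_T)·Δμ_N(x) − [ (e_T(x)/p_T)·(1{g=C}/e_C(x))·(y₁ − y₀ − Δμ_C(x)) + (1{g=T}/p_T)·Δμ_C(x) ]. Under consistency of the potential outcomes and Assumptions (A5) and (A6), (1/n)·Σ_{i=1}^{n} φ(Y₀ᵢ, Y₁ᵢ, Gᵢ, Xᵢ) converges almost surely, as n → ∞, to δ := E[(Y₁^{(1,1)} − Y₁^{(1,0)})·1{G=T}]/p_T. -/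
open MeasureTheory ProbabilityTheory Filter Topology

/-- Group label: `T` = treated (`g(A)=(1,0)`), `N` = neighboring control (`g(A)=(0,1)`),
`C` = non-neighboring control (`g(A)=(0,0)`). -/
inductive GLabel : Type
  | T | N | C
  deriving DecidableEq

instance : MeasurableSpace GLabel := ⊤

/-- The σ-algebra `𝔛` generated by the covariates `X`. -/
def sigmaX {Ω : Type} {q : ℕ} (X : Ω → (Fin q → ℝ)) : MeasurableSpace Ω :=
  MeasurableSpace.comap X inferInstance

/-- The indicator `1{G = g}` as a real-valued function. -/
def indG {Ω : Type} (G : Ω → GLabel) (g : GLabel) (ω : Ω) : ℝ :=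
  if G ω = g then 1 else 0

/-- `f` is a version of the conditional expectation `E[Z ∣ G = g, X]`:
it is measurable and `E[Z·1{G=g} ∣ 𝔛] = f(X)·e_g(X)` `P`-a.s. -/
def IsCondVersion {Ω : Type} [MeasurableSpace Ω] (P : Measure Ω) {q : ℕ}
    (X : Ω → (Fin q → ℝ)) (G : Ω → GLabel) (e : GLabel → (Fin q → ℝ) → ℝ)
    (g : GLabel) (Z : Ω → ℝ) (f : (Fin q → ℝ) → ℝ) : Prop :=
  Measurable f ∧
    P[(fun ω => Z ω * indG G g ω) | sigmaX X] =ᵐ[P] (fun ω => f (X ω) * e g (X ω))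

instance : MeasurableSingletonClass GLabel := ⟨fun _ => trivial⟩

lemma measurable_indG' {Ω : Type} [MeasurableSpace Ω] {G : Ω → GLabel} (hG : Measurable G)
    (g : GLabel) : Measurable (indG G g) :=
  Measurable.ite (hG (measurableSet_singleton g)) measurable_const measurable_const

lemma abs_indG_le' {Ω : Type} (G : Ω → GLabel) (g : GLabel) (ω : Ω) : |indG G g ω| ≤ 1 := by
  unfold indG; split_ifs <;> norm_num

theorem stmt_14
    {Ω : Type} [MeasurableSpace Ω] (P : Measure Ω) [IsProbabilityMeasure P]
    {q : ℕ} (X : Ω → (Fin q → ℝ)) (hX : Measurable X)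
    (G : Ω → GLabel) (hG : Measurable G)
    (Y0 Y1 : Ω → ℝ) (hY0 : Integrable Y0 P) (hY1 : Integrable Y1 P)
    (e : GLabel → (Fin q → ℝ) → ℝ) (he : ∀ g, Measurable (e g))
    (he1 : ∀ g x, e g x ≤ 1)
    (hprop : ∀ g : GLabel,
      P[(fun ω => indG G g ω) | sigmaX X] =ᵐ[P] (fun ω => e g (X ω)))
    (ε : ℝ) (hε : 0 < ε) (hpos : ∀ g x, ε ≤ e g x)
    (hpT : 0 < (P {ω | G ω = GLabel.T}).toReal)
    (Y110 Y111 Y101 Y100 Y000 : Ω → ℝ)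
    (hI10 : Integrable Y110 P) (hI11 : Integrable Y111 P)
    (hI01 : Integrable Y101 P) (hI00 : Integrable Y100 P) (hI000 : Integrable Y000 P)
    (hconsT : ∀ᵐ ω ∂P, G ω = GLabel.T → Y1 ω = Y110 ω)
    (hconsN : ∀ᵐ ω ∂P, G ω = GLabel.N → Y1 ω = Y101 ω)
    (hconsC : ∀ᵐ ω ∂P, G ω = GLabel.C → Y1 ω = Y100 ω)
    (hcons0 : Y0 =ᵐ[P] Y000)
    (fT fN : (Fin q → ℝ) → ℝ)
    (hfT : IsCondVersion P X G e GLabel.T (fun ω => Y110 ω - Y111 ω) fT)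
    (hfN : IsCondVersion P X G e GLabel.N (fun ω => Y101 ω - Y100 ω) fN)
    (hA5 : ∀ᵐ ω ∂P, fT (X ω) + fN (X ω) = 0)
    (gN gC : (Fin q → ℝ) → ℝ)
    (hgN : IsCondVersion P X G e GLabel.N (fun ω => Y100 ω - Y000 ω) gN)
    (hgC : IsCondVersion P X G e GLabel.C (fun ω => Y100 ω - Y000 ω) gC)
    (hA6 : ∀ᵐ ω ∂P, gN (X ω) = gC (X ω))
    (ΔμN ΔμC : (Fin q → ℝ) → ℝ)
    (hΔμN : IsCondVersion P X G e GLabel.N (fun ω => Y1 ω - Y0 ω) ΔμN)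
    (hΔμC : IsCondVersion P X G e GLabel.C (fun ω => Y1 ω - Y0 ω) ΔμC)
    (MN : ℝ) (hMN : ∀ x, |ΔμN x| ≤ MN) (MC : ℝ) (hMC : ∀ x, |ΔμC x| ≤ MC)
    (φ : ℝ × ℝ × GLabel × (Fin q → ℝ) → ℝ)
    (hφ : ∀ (y0 y1 : ℝ) (g : GLabel) (x : Fin q → ℝ), φ (y0, y1, g, x) =
      (e GLabel.T x / (P {ω | G ω = GLabel.T}).toReal) *
          ((if g = GLabel.N then (1:ℝ) else 0) / e GLabel.N x) * (y1 - y0 - ΔμN x)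
        + ((if g = GLabel.T then (1:ℝ) else 0) / (P {ω | G ω = GLabel.T}).toReal) * ΔμN x
        - ((e GLabel.T x / (P {ω | G ω = GLabel.T}).toReal) *
            ((if g = GLabel.C then (1:ℝ) else 0) / e GLabel.C x) * (y1 - y0 - ΔμC x)
          + ((if g = GLabel.T then (1:ℝ) else 0) / (P {ω | G ω = GLabel.T}).toReal) * ΔμC x))
    (V : ℕ → Ω → ℝ × ℝ × GLabel × (Fin q → ℝ))
    (hVmeas : ∀ i, Measurable (V i))
    (hVindep : iIndepFun V P)
    (hVid : ∀ i, IdentDistrib (V i) (fun ω => (Y0 ω, Y1 ω, G ω, X ω)) P P)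
    :
    ∀ᵐ ω ∂P, Tendsto (fun n : ℕ => (n : ℝ)⁻¹ * ∑ i ∈ Finset.range n, φ (V i ω))
      atTop (𝓝 ((∫ ω, (Y111 ω - Y110 ω) * indG G GLabel.T ω ∂P) / (P {ω | G ω = GLabel.T}).toReal)) := by
    classical
  set pT : ℝ := (P {ω | G ω = GLabel.T}).toReal with hpTdef
  have hm : sigmaX X ≤ ‹MeasurableSpace Ω› := hX.comap_le
  have hXm : Measurable[sigmaX X] X := comap_measurable X
  have hpTε : 0 < pT * ε := mul_pos hpT hε
  -- basic positivity of propensities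
  have hepos : ∀ g x, 0 < e g x := fun g x => hε.trans_le (hpos g x)
  -- integrability of `Z * indG`
  have hmulind : ∀ (Z : Ω → ℝ), Integrable Z P → ∀ g, Integrable (fun ω => Z ω * indG G g ω) P := by
    intro Z hZ g
    have := Integrable.bdd_mul hZ ((measurable_indG' hG g).aestronglyMeasurable)
      (Eventually.of_forall fun x => abs_indG_le' G g x)
    exact this.congr (Eventually.of_forall fun ω => by ring)
  have hiInd : ∀ g, Integrable (indG G g) P := by
    intro g
    refine (integrable_const (1:ℝ)).mono'
      ((measurable_indG' hG g).aestronglyMeasurable) (Eventually.of_forall fun ω => ?_)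
    simpa using abs_indG_le' G g ω
  -- `f (X ·)` is integrable for any conditional version
  have hcvInt : ∀ (g : GLabel) (Z : Ω → ℝ) (f : (Fin q → ℝ) → ℝ),
      IsCondVersion P X G e g Z f → Integrable (fun ω => f (X ω)) P := by
    intro g Z f hf
    have h1 : Integrable (fun ω => f (X ω) * e g (X ω)) P := integrable_condExp.congr hf.2
    refine (h1.abs.const_mul ε⁻¹).mono' ((hf.1.comp hX).aestronglyMeasurable)
      (Eventually.of_forall fun ω => ?_)
    have hge : ε ≤ e g (X ω) := hpos g (X ω)
    have h0 : 0 < e g (X ω) := hepos g (X ω)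
    rw [Real.norm_eq_abs, abs_mul, abs_of_pos h0]
    have h2 : ε⁻¹ * ε = 1 := inv_mul_cancel₀ (ne_of_gt hε)
    nlinarith [abs_nonneg (f (X ω)), inv_nonneg.mpr hε.le,
      mul_le_mul_of_nonneg_left hge (mul_nonneg (inv_nonneg.mpr hε.le) (abs_nonneg (f (X ω))))]
  -- boundedness of `ΔμN (X ·)`, `ΔμC (X ·)`
  have hμNi : Integrable (fun ω => ΔμN (X ω)) P :=
    (integrable_const MN).mono' ((hΔμN.1.comp hX).aestronglyMeasurable)
      (Eventually.of_forall fun ω => by simpa using hMN (X ω))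
  have hμCi : Integrable (fun ω => ΔμC (X ω)) P :=
    (integrable_const MC).mono' ((hΔμC.1.comp hX).aestronglyMeasurable)
      (Eventually.of_forall fun ω => by simpa using hMC (X ω))
  have hiY : Integrable (fun ω => Y1 ω - Y0 ω) P := hY1.sub hY0
  -- strongly measurable w.r.t. `sigmaX X`
  have hsm : ∀ h : (Fin q → ℝ) → ℝ, Measurable h →
      StronglyMeasurable[sigmaX X] (fun ω => h (X ω)) :=
    fun h hh => (hh.comp hXm).stronglyMeasurable
  -- pull-out property
  have hpull : ∀ (w : (Fin q → ℝ) → ℝ), Measurable w → ∀ (Z : Ω → ℝ), Integrable Z P →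
      Integrable (fun ω => w (X ω) * Z ω) P →
      P[(fun ω => w (X ω) * Z ω) | sigmaX X]
        =ᵐ[P] fun ω => w (X ω) * (P[Z | sigmaX X]) ω :=
    fun w hw Z hZ hwZ => condExp_mul_of_stronglyMeasurable_left (hsm w hw) hwZ hZ
  -- vanishing integral of `w(X) * Z` when `E[Z|𝔛] = 0`
  have hzero : ∀ (w : (Fin q → ℝ) → ℝ), Measurable w → ∀ (Z : Ω → ℝ), Integrable Z P →
      Integrable (fun ω => w (X ω) * Z ω) P → P[Z | sigmaX X] =ᵐ[P] 0 →
      ∫ ω, w (X ω) * Z ω ∂P = 0 := by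
    intro w hw Z hZ hwZ h0
    rw [← integral_condExp hm (f := fun ω => w (X ω) * Z ω)]
    refine integral_eq_zero_of_ae ?_
    filter_upwards [hpull w hw Z hZ hwZ, h0] with ω h1 h2
    simp only [Pi.zero_apply] at h2 ⊢
    rw [h1, h2, mul_zero]
  -- bound on the weights
  have hwb : ∀ (g' : GLabel) (ω : Ω) (gg : GLabel),
      ‖e GLabel.T (X ω) / pT * (indG G gg ω / e g' (X ω))‖ ≤ (pT * ε)⁻¹ := by
    intro g' ω gg
    have h0 : 0 < e g' (X ω) := hepos g' (X ω)
    have h1 : 0 ≤ e GLabel.T (X ω) := (hepos _ _).le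
    rw [Real.norm_eq_abs]
    unfold indG
    split_ifs with h
    · have heq : e GLabel.T (X ω) / pT * (1 / e g' (X ω))
          = e GLabel.T (X ω) / (pT * e g' (X ω)) := by ring
      rw [heq, abs_of_nonneg (div_nonneg h1 (by positivity)), ← one_div (pT * ε)]
      exact div_le_div₀ zero_le_one (he1 _ _) hpTε
        (mul_le_mul_of_nonneg_left (hpos g' (X ω)) hpT.le)
    · simp only [zero_div, mul_zero, abs_zero]
      positivity
  have hwb' : ∀ ω, ‖indG G GLabel.T ω / pT‖ ≤ pT⁻¹ := by
    intro ω
    rw [Real.norm_eq_abs]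
    unfold indG
    split_ifs with h
    · rw [abs_of_nonneg (by positivity), one_div]
    · simp only [zero_div, abs_zero]
      positivity
  -- integrability of the three pieces
  have hti1 : Integrable (fun ω =>
      e GLabel.T (X ω) / pT * (indG G GLabel.N ω / e GLabel.N (X ω))
        * (Y1 ω - Y0 ω - ΔμN (X ω))) P := by
    have := Integrable.bdd_mul (hiY.sub hμNi)
      ((((he GLabel.T).comp hX).div_const pT).mul
        ((measurable_indG' hG GLabel.N).div ((he GLabel.N).comp hX))).aestronglyMeasurable
      (Eventually.of_forall fun ω => hwb GLabel.N ω GLabel.N)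
    exact this.congr (Eventually.of_forall fun ω => by simp only [Pi.sub_apply, Pi.mul_apply, Pi.div_apply, Function.comp_apply])
  have hti3 : Integrable (fun ω =>
      e GLabel.T (X ω) / pT * (indG G GLabel.C ω / e GLabel.C (X ω))
        * (Y1 ω - Y0 ω - ΔμC (X ω))) P := by
    have := Integrable.bdd_mul (hiY.sub hμCi)
      ((((he GLabel.T).comp hX).div_const pT).mul
        ((measurable_indG' hG GLabel.C).div ((he GLabel.C).comp hX))).aestronglyMeasurable
      (Eventually.of_forall fun ω => hwb GLabel.C ω GLabel.C)
    exact this.congr (Eventually.of_forall fun ω => by simp only [Pi.sub_apply, Pi.mul_apply, Pi.div_apply, Function.comp_apply])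
  have htim : Integrable (fun ω =>
      indG G GLabel.T ω / pT * (ΔμN (X ω) - ΔμC (X ω))) P := by
    have := Integrable.bdd_mul (hμNi.sub hμCi)
      (((measurable_indG' hG GLabel.T).div_const pT)).aestronglyMeasurable
      (Eventually.of_forall hwb')
    exact this.congr (Eventually.of_forall fun ω => rfl)
  -- conditional expectation of the N-noise term vanishes
  have hcondN : P[(fun ω => (Y1 ω - Y0 ω) * indG G GLabel.N ω
      - ΔμN (X ω) * indG G GLabel.N ω) | sigmaX X] =ᵐ[P] 0 := by
    have h1 : Integrable (fun ω => (Y1 ω - Y0 ω) * indG G GLabel.N ω) P :=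
      hmulind _ hiY GLabel.N
    have h2 : Integrable (fun ω => ΔμN (X ω) * indG G GLabel.N ω) P := hmulind _ hμNi GLabel.N
    have hsub : P[(fun ω => (Y1 ω - Y0 ω) * indG G GLabel.N ω
          - ΔμN (X ω) * indG G GLabel.N ω) | sigmaX X]
        =ᵐ[P] P[(fun ω => (Y1 ω - Y0 ω) * indG G GLabel.N ω) | sigmaX X]
          - P[(fun ω => ΔμN (X ω) * indG G GLabel.N ω) | sigmaX X] := condExp_sub h1 h2 _
    have hb : P[(fun ω => ΔμN (X ω) * indG G GLabel.N ω) | sigmaX X]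
        =ᵐ[P] fun ω => ΔμN (X ω) * e GLabel.N (X ω) := by
      refine (hpull ΔμN hΔμN.1 (indG G GLabel.N) (hiInd _) h2).trans ?_
      filter_upwards [hprop GLabel.N] with ω h
      rw [h]
    refine hsub.trans ?_
    filter_upwards [hΔμN.2, hb] with ω e1 e2
    simp only [Pi.sub_apply, Pi.zero_apply, e1, e2, sub_self]
  have hcondC : P[(fun ω => (Y1 ω - Y0 ω) * indG G GLabel.C ω
      - ΔμC (X ω) * indG G GLabel.C ω) | sigmaX X] =ᵐ[P] 0 := by
    have h1 : Integrable (fun ω => (Y1 ω - Y0 ω) * indG G GLabel.C ω) P :=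
      hmulind _ hiY GLabel.C
    have h2 : Integrable (fun ω => ΔμC (X ω) * indG G GLabel.C ω) P := hmulind _ hμCi GLabel.C
    have hsub : P[(fun ω => (Y1 ω - Y0 ω) * indG G GLabel.C ω
          - ΔμC (X ω) * indG G GLabel.C ω) | sigmaX X]
        =ᵐ[P] P[(fun ω => (Y1 ω - Y0 ω) * indG G GLabel.C ω) | sigmaX X]
          - P[(fun ω => ΔμC (X ω) * indG G GLabel.C ω) | sigmaX X] := condExp_sub h1 h2 _
    have hb : P[(fun ω => ΔμC (X ω) * indG G GLabel.C ω) | sigmaX X]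
        =ᵐ[P] fun ω => ΔμC (X ω) * e GLabel.C (X ω) := by
      refine (hpull ΔμC hΔμC.1 (indG G GLabel.C) (hiInd _) h2).trans ?_
      filter_upwards [hprop GLabel.C] with ω h
      rw [h]
    refine hsub.trans ?_
    filter_upwards [hΔμC.2, hb] with ω e1 e2
    simp only [Pi.sub_apply, Pi.zero_apply, e1, e2, sub_self]
  -- the two noise terms integrate to zero
  have hZN : Integrable (fun ω => (Y1 ω - Y0 ω) * indG G GLabel.N ω
      - ΔμN (X ω) * indG G GLabel.N ω) P := (hmulind _ hiY GLabel.N).sub (hmulind _ hμNi GLabel.N)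
  have hZC : Integrable (fun ω => (Y1 ω - Y0 ω) * indG G GLabel.C ω
      - ΔμC (X ω) * indG G GLabel.C ω) P := (hmulind _ hiY GLabel.C).sub (hmulind _ hμCi GLabel.C)
  have hwN : Measurable (fun x => e GLabel.T x / (pT * e GLabel.N x)) :=
    (he GLabel.T).div (measurable_const.mul (he GLabel.N))
  have hwC : Measurable (fun x => e GLabel.T x / (pT * e GLabel.C x)) :=
    (he GLabel.T).div (measurable_const.mul (he GLabel.C))
  have ht1zero : ∫ ω, e GLabel.T (X ω) / pT * (indG G GLabel.N ω / e GLabel.N (X ω))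
      * (Y1 ω - Y0 ω - ΔμN (X ω)) ∂P = 0 := by
    have hprod : Integrable (fun ω => e GLabel.T (X ω) / (pT * e GLabel.N (X ω))
        * ((Y1 ω - Y0 ω) * indG G GLabel.N ω - ΔμN (X ω) * indG G GLabel.N ω)) P := by
      refine hti1.congr (Eventually.of_forall fun ω => ?_)
      ring
    have h0 := hzero _ hwN _ hZN hprod hcondN
    rw [← h0]
    refine integral_congr_ae (Eventually.of_forall fun ω => ?_)
    ring
  have ht3zero : ∫ ω, e GLabel.T (X ω) / pT * (indG G GLabel.C ω / e GLabel.C (X ω))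
      * (Y1 ω - Y0 ω - ΔμC (X ω)) ∂P = 0 := by
    have hprod : Integrable (fun ω => e GLabel.T (X ω) / (pT * e GLabel.C (X ω))
        * ((Y1 ω - Y0 ω) * indG G GLabel.C ω - ΔμC (X ω) * indG G GLabel.C ω)) P := by
      refine hti3.congr (Eventually.of_forall fun ω => ?_)
      ring
    have h0 := hzero _ hwC _ hZC hprod hcondC
    rw [← h0]
    refine integral_congr_ae (Eventually.of_forall fun ω => ?_)
    ring
  -- identification: ΔμN(X) = fN(X) + gN(X) a.s.
  have hND : (fun ω => ΔμN (X ω)) =ᵐ[P] fun ω => fN (X ω) + gN (X ω) := by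
    have e1 : (fun ω => (Y1 ω - Y0 ω) * indG G GLabel.N ω) =ᵐ[P]
        (fun ω => (Y101 ω - Y100 ω) * indG G GLabel.N ω
          + (Y100 ω - Y000 ω) * indG G GLabel.N ω) := by
      filter_upwards [hconsN, hcons0] with ω h1 h2
      unfold indG
      by_cases h : G ω = GLabel.N
      · rw [if_pos h, h1 h, h2]; ring
      · rw [if_neg h]; ring
    have e2 := condExp_congr_ae (m := sigmaX X) e1
    have e3 : P[(fun ω => (Y101 ω - Y100 ω) * indG G GLabel.N ω
          + (Y100 ω - Y000 ω) * indG G GLabel.N ω) | sigmaX X]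
        =ᵐ[P] P[(fun ω => (Y101 ω - Y100 ω) * indG G GLabel.N ω) | sigmaX X]
          + P[(fun ω => (Y100 ω - Y000 ω) * indG G GLabel.N ω) | sigmaX X] :=
      condExp_add (hmulind _ (hI01.sub hI00) GLabel.N) (hmulind _ (hI00.sub hI000) GLabel.N) _
    have e5 : (fun ω => ΔμN (X ω) * e GLabel.N (X ω)) =ᵐ[P]
        fun ω => (fN (X ω) + gN (X ω)) * e GLabel.N (X ω) := by
      refine hΔμN.2.symm.trans ((e2.trans (e3.trans ?_)))
      filter_upwards [hfN.2, hgN.2] with ω a1 a2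
      simp only [Pi.add_apply, a1, a2]
      ring
    filter_upwards [e5] with ω h
    exact mul_right_cancel₀ (ne_of_gt (hepos GLabel.N (X ω))) h
  -- identification: ΔμC(X) = gC(X) a.s.
  have hCD : (fun ω => ΔμC (X ω)) =ᵐ[P] fun ω => gC (X ω) := by
    have e1 : (fun ω => (Y1 ω - Y0 ω) * indG G GLabel.C ω) =ᵐ[P]
        (fun ω => (Y100 ω - Y000 ω) * indG G GLabel.C ω) := by
      filter_upwards [hconsC, hcons0] with ω h1 h2
      unfold indG
      by_cases h : G ω = GLabel.C
      · rw [if_pos h, h1 h, h2]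
      · rw [if_neg h]; ring
    have e2 := condExp_congr_ae (m := sigmaX X) e1
    have e5 : (fun ω => ΔμC (X ω) * e GLabel.C (X ω)) =ᵐ[P]
        fun ω => gC (X ω) * e GLabel.C (X ω) := hΔμC.2.symm.trans (e2.trans hgC.2)
    filter_upwards [e5] with ω h
    exact mul_right_cancel₀ (ne_of_gt (hepos GLabel.C (X ω))) h
  -- key identity
  have hkey : (fun ω => ΔμN (X ω) - ΔμC (X ω)) =ᵐ[P] fun ω => -fT (X ω) := by
    filter_upwards [hND, hCD, hA6, hA5] with ω a b c d
    rw [a, b, ← c]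
    linarith
  -- the middle term
  have hfTX : Integrable (fun ω => fT (X ω)) P := hcvInt _ _ _ hfT
  have hfTind : Integrable (fun ω => fT (X ω) * indG G GLabel.T ω) P := hmulind _ hfTX _
  have hIfT : ∫ ω, fT (X ω) * indG G GLabel.T ω ∂P
      = ∫ ω, (Y110 ω - Y111 ω) * indG G GLabel.T ω ∂P := by
    rw [← integral_condExp hm (f := fun ω => fT (X ω) * indG G GLabel.T ω),
      ← integral_condExp hm (f := fun ω => (Y110 ω - Y111 ω) * indG G GLabel.T ω)]
    refine integral_congr_ae ?_
    refine ((hpull fT hfT.1 (indG G GLabel.T) (hiInd _) hfTind).trans ?_).trans hfT.2.symm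
    filter_upwards [hprop GLabel.T] with ω h
    rw [h]
  have htm : ∫ ω, indG G GLabel.T ω / pT * (ΔμN (X ω) - ΔμC (X ω)) ∂P
      = (∫ ω, (Y111 ω - Y110 ω) * indG G GLabel.T ω ∂P) / pT := by
    have s1 : ∫ ω, indG G GLabel.T ω / pT * (ΔμN (X ω) - ΔμC (X ω)) ∂P
        = ∫ ω, -pT⁻¹ * (fT (X ω) * indG G GLabel.T ω) ∂P := by
      refine integral_congr_ae ?_
      filter_upwards [hkey] with ω h
      rw [h]
      ring
    have s2 : ∫ ω, (Y110 ω - Y111 ω) * indG G GLabel.T ω ∂P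
        = - ∫ ω, (Y111 ω - Y110 ω) * indG G GLabel.T ω ∂P := by
      rw [← integral_neg]
      refine integral_congr_ae (Eventually.of_forall fun ω => ?_)
      ring
    rw [s1, integral_const_mul, hIfT, s2]
    ring
  -- pointwise decomposition of φ
  have hsplit : ∀ ω, φ (Y0 ω, Y1 ω, G ω, X ω) =
      e GLabel.T (X ω) / pT * (indG G GLabel.N ω / e GLabel.N (X ω))
        * (Y1 ω - Y0 ω - ΔμN (X ω))
      + indG G GLabel.T ω / pT * (ΔμN (X ω) - ΔμC (X ω))
      - e GLabel.T (X ω) / pT * (indG G GLabel.C ω / e GLabel.C (X ω))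
        * (Y1 ω - Y0 ω - ΔμC (X ω)) := by
    intro ω
    rw [hφ]
    unfold indG
    ring
  have hAint : Integrable (fun ω => φ (Y0 ω, Y1 ω, G ω, X ω)) P := by
    refine (((hti1.add htim).sub hti3).congr (Eventually.of_forall fun ω => ?_))
    simp only [Pi.add_apply, Pi.sub_apply]
    exact (hsplit ω).symm
  have hIφ : ∫ ω, φ (Y0 ω, Y1 ω, G ω, X ω) ∂P
      = (∫ ω, (Y111 ω - Y110 ω) * indG G GLabel.T ω ∂P) / pT := by
    have i1 : Integrable (fun ω =>
        e GLabel.T (X ω) / pT * (indG G GLabel.N ω / e GLabel.N (X ω))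
          * (Y1 ω - Y0 ω - ΔμN (X ω))
        + indG G GLabel.T ω / pT * (ΔμN (X ω) - ΔμC (X ω))) P := hti1.add htim
    calc ∫ ω, φ (Y0 ω, Y1 ω, G ω, X ω) ∂P
        = ∫ ω, (e GLabel.T (X ω) / pT * (indG G GLabel.N ω / e GLabel.N (X ω))
            * (Y1 ω - Y0 ω - ΔμN (X ω))
          + indG G GLabel.T ω / pT * (ΔμN (X ω) - ΔμC (X ω))
          - e GLabel.T (X ω) / pT * (indG G GLabel.C ω / e GLabel.C (X ω))
            * (Y1 ω - Y0 ω - ΔμC (X ω))) ∂P :=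
          integral_congr_ae (Eventually.of_forall fun ω => hsplit ω)
      _ = (∫ ω, (e GLabel.T (X ω) / pT * (indG G GLabel.N ω / e GLabel.N (X ω))
            * (Y1 ω - Y0 ω - ΔμN (X ω))
          + indG G GLabel.T ω / pT * (ΔμN (X ω) - ΔμC (X ω))) ∂P)
          - ∫ ω, e GLabel.T (X ω) / pT * (indG G GLabel.C ω / e GLabel.C (X ω))
            * (Y1 ω - Y0 ω - ΔμC (X ω)) ∂P := integral_sub i1 hti3
      _ = (∫ ω, e GLabel.T (X ω) / pT * (indG G GLabel.N ω / e GLabel.N (X ω))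
            * (Y1 ω - Y0 ω - ΔμN (X ω)) ∂P)
          + (∫ ω, indG G GLabel.T ω / pT * (ΔμN (X ω) - ΔμC (X ω)) ∂P)
          - ∫ ω, e GLabel.T (X ω) / pT * (indG G GLabel.C ω / e GLabel.C (X ω))
            * (Y1 ω - Y0 ω - ΔμC (X ω)) ∂P := by rw [integral_add hti1 htim]
      _ = (∫ ω, (Y111 ω - Y110 ω) * indG G GLabel.T ω ∂P) / pT := by
          rw [ht1zero, ht3zero, htm]; ring
  -- measurability of φ
  have hφm : Measurable φ := by
    have hrep : φ = fun p : ℝ × ℝ × GLabel × (Fin q → ℝ) =>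
        e GLabel.T p.2.2.2 / pT
          * ((if p.2.2.1 = GLabel.N then (1:ℝ) else 0) / e GLabel.N p.2.2.2)
          * (p.2.1 - p.1 - ΔμN p.2.2.2)
        + (if p.2.2.1 = GLabel.T then (1:ℝ) else 0) / pT * ΔμN p.2.2.2
        - (e GLabel.T p.2.2.2 / pT
            * ((if p.2.2.1 = GLabel.C then (1:ℝ) else 0) / e GLabel.C p.2.2.2)
            * (p.2.1 - p.1 - ΔμC p.2.2.2)
          + (if p.2.2.1 = GLabel.T then (1:ℝ) else 0) / pT * ΔμC p.2.2.2) := by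
      funext p
      obtain ⟨y0, y1, g, x⟩ := p
      exact hφ y0 y1 g x
    rw [hrep]
    have hx : Measurable fun p : ℝ × ℝ × GLabel × (Fin q → ℝ) => p.2.2.2 :=
      measurable_snd.snd.snd
    have hgg : Measurable fun p : ℝ × ℝ × GLabel × (Fin q → ℝ) => p.2.2.1 :=
      measurable_snd.snd.fst
    have hy1 : Measurable fun p : ℝ × ℝ × GLabel × (Fin q → ℝ) => p.2.1 := measurable_snd.fst
    have hy0 : Measurable fun p : ℝ × ℝ × GLabel × (Fin q → ℝ) => p.1 := measurable_fst
    have hind : ∀ g0 : GLabel, Measurable fun p : ℝ × ℝ × GLabel × (Fin q → ℝ) =>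
        (if p.2.2.1 = g0 then (1:ℝ) else 0) := fun g0 =>
      Measurable.ite (hgg (measurableSet_singleton g0)) measurable_const measurable_const
    refine Measurable.sub (Measurable.add ?_ ?_) (Measurable.add ?_ ?_)
    · exact ((((he GLabel.T).comp hx).div_const pT).mul
        ((hind GLabel.N).div ((he GLabel.N).comp hx))).mul
        ((hy1.sub hy0).sub (hΔμN.1.comp hx))
    · exact ((hind GLabel.T).div_const pT).mul (hΔμN.1.comp hx)
    · exact ((((he GLabel.T).comp hx).div_const pT).mul
        ((hind GLabel.C).div ((he GLabel.C).comp hx))).mul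
        ((hy1.sub hy0).sub (hΔμC.1.comp hx))
    · exact ((hind GLabel.T).div_const pT).mul (hΔμC.1.comp hx)
  -- strong law of large numbers
  have hA : ∀ i, IdentDistrib (φ ∘ V i) (fun ω => φ (Y0 ω, Y1 ω, G ω, X ω)) P P :=
    fun i => (hVid i).comp hφm
  have hW0int : Integrable (φ ∘ V 0) P := (hA 0).integrable_iff.mpr hAint
  have hindep2 : Pairwise (Function.onFun (IndepFun · · P) fun i => φ ∘ V i) :=
    fun i j hij => (hVindep.comp (fun _ => φ) fun _ => hφm).indepFun hij
  have hident2 : ∀ i, IdentDistrib (φ ∘ V i) (φ ∘ V 0) P P :=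
    fun i => (hA i).trans (hA 0).symm
  have hSLLN := strong_law_ae_real (fun i => φ ∘ V i) hW0int hindep2 hident2
  have hEq : P[φ ∘ V 0] = (∫ ω, (Y111 ω - Y110 ω) * indG G GLabel.T ω ∂P) / pT :=
    ((hA 0).integral_eq).trans hIφ
  filter_upwards [hSLLN] with ω hω
  rw [hEq] at hω
  have h3 : (fun n : ℕ => (∑ i ∈ Finset.range n, (φ ∘ V i) ω) / n)
      = fun n : ℕ => (n : ℝ)⁻¹ * ∑ i ∈ Finset.range n, φ (V i ω) := by
    funext n
    rw [div_eq_inv_mul]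
    rfl
  rw [h3] at hω
  exact hω
end

section
/- (Corollary 1, almost-sure consistency of the doubly-robust AOTT estimator with correctly specified nuisance functions.) Let (Y₀ᵢ, Y₁ᵢ, Gᵢ, Xᵢ)_{i≥1} be an i.i.d. sequence with the same distribution as (Y₀, Y₁, G, X), set ΔYᵢ := Y₁ᵢ − Y₀ᵢ, and let Δμ_N, Δμ_C be bounded versions of E[ΔY ∣ G=N, X] and E[ΔY ∣ G=C, X]. Define φ_τ(y₀, y₁, g, x) := (1{g=T}/p_T)·(y₁ − y₀ − Δμ_C(x)) + (e_T(x)/p_T)·(1{g=N}/e_N(x))·(y₁ − y₀ − Δμ_N(x)) + (1{g=T}/p_T)·Δμ_N(x) − (e_T(x)/p_T)·(1{g=C}/e_C(x))·(y₁ − y₀ − Δμ_C(x)) − (1{g=T}/p_T)·Δμ_C(x). Under consistency of the potential outcomes and Assumptions (A4), (A5) and (A6), (1/n)·Σ_{i=1}^{n} φ_τ(Y₀ᵢ, Y₁ᵢ, Gᵢ, Xᵢ) converges almost surely, as n → ∞, to the AOTT τ := E[(Y₁^{(1,1)} − Y₁^{(0,0)})·1{G=T}]/p_T. -/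
open MeasureTheory ProbabilityTheory Filter Topology

set_option maxHeartbeats 1000000 in
theorem stmt_15
    {Ω : Type} [MeasurableSpace Ω] (P : Measure Ω) [IsProbabilityMeasure P]
    {q : ℕ} (X : Ω → (Fin q → ℝ)) (hX : Measurable X)
    (G : Ω → GLabel) (hG : Measurable G)
    (Y0 Y1 : Ω → ℝ) (hY0 : Integrable Y0 P) (hY1 : Integrable Y1 P)
    (e : GLabel → (Fin q → ℝ) → ℝ) (he : ∀ g, Measurable (e g))
    (he1 : ∀ g x, e g x ≤ 1)
    (hprop : ∀ g : GLabel,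
      P[(fun ω => indG G g ω) | sigmaX X] =ᵐ[P] (fun ω => e g (X ω)))
    (ε : ℝ) (hε : 0 < ε) (hpos : ∀ g x, ε ≤ e g x)
    (hpT : 0 < (P {ω | G ω = GLabel.T}).toReal)
    (Y110 Y111 Y101 Y100 Y000 : Ω → ℝ)
    (hI10 : Integrable Y110 P) (hI11 : Integrable Y111 P)
    (hI01 : Integrable Y101 P) (hI00 : Integrable Y100 P) (hI000 : Integrable Y000 P)
    (hconsT : ∀ᵐ ω ∂P, G ω = GLabel.T → Y1 ω = Y110 ω)
    (hconsN : ∀ᵐ ω ∂P, G ω = GLabel.N → Y1 ω = Y101 ω)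
    (hconsC : ∀ᵐ ω ∂P, G ω = GLabel.C → Y1 ω = Y100 ω)
    (hcons0 : Y0 =ᵐ[P] Y000)
    (gN gC : (Fin q → ℝ) → ℝ)
    (hgN : IsCondVersion P X G e GLabel.N (fun ω => Y100 ω - Y000 ω) gN)
    (hgC : IsCondVersion P X G e GLabel.C (fun ω => Y100 ω - Y000 ω) gC)
    (hA6 : ∀ᵐ ω ∂P, gN (X ω) = gC (X ω))
    (gT : (Fin q → ℝ) → ℝ)
    (hgT : IsCondVersion P X G e GLabel.T (fun ω => Y100 ω - Y000 ω) gT)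
    (hA4 : ∀ᵐ ω ∂P, gT (X ω) = gC (X ω))
    (fT fN : (Fin q → ℝ) → ℝ)
    (hfT : IsCondVersion P X G e GLabel.T (fun ω => Y110 ω - Y111 ω) fT)
    (hfN : IsCondVersion P X G e GLabel.N (fun ω => Y101 ω - Y100 ω) fN)
    (hA5 : ∀ᵐ ω ∂P, fT (X ω) + fN (X ω) = 0)
    (ΔμN ΔμC : (Fin q → ℝ) → ℝ)
    (hΔμN : IsCondVersion P X G e GLabel.N (fun ω => Y1 ω - Y0 ω) ΔμN)
    (hΔμC : IsCondVersion P X G e GLabel.C (fun ω => Y1 ω - Y0 ω) ΔμC)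
    (MN : ℝ) (hMN : ∀ x, |ΔμN x| ≤ MN) (MC : ℝ) (hMC : ∀ x, |ΔμC x| ≤ MC)
    (φτ : ℝ × ℝ × GLabel × (Fin q → ℝ) → ℝ)
    (hφτ : ∀ (y0 y1 : ℝ) (g : GLabel) (x : Fin q → ℝ), φτ (y0, y1, g, x) =
      ((if g = GLabel.T then (1:ℝ) else 0) / (P {ω | G ω = GLabel.T}).toReal) * (y1 - y0 - ΔμC x)
        + (e GLabel.T x / (P {ω | G ω = GLabel.T}).toReal) *
            ((if g = GLabel.N then (1:ℝ) else 0) / e GLabel.N x) * (y1 - y0 - ΔμN x)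
        + ((if g = GLabel.T then (1:ℝ) else 0) / (P {ω | G ω = GLabel.T}).toReal) * ΔμN x
        - (e GLabel.T x / (P {ω | G ω = GLabel.T}).toReal) *
            ((if g = GLabel.C then (1:ℝ) else 0) / e GLabel.C x) * (y1 - y0 - ΔμC x)
        - ((if g = GLabel.T then (1:ℝ) else 0) / (P {ω | G ω = GLabel.T}).toReal) * ΔμC x)
    (V : ℕ → Ω → ℝ × ℝ × GLabel × (Fin q → ℝ))
    (hVmeas : ∀ i, Measurable (V i))
    (hVindep : iIndepFun V P)
    (hVid : ∀ i, IdentDistrib (V i) (fun ω => (Y0 ω, Y1 ω, G ω, X ω)) P P)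
    :
    ∀ᵐ ω ∂P, Tendsto (fun n : ℕ => (n : ℝ)⁻¹ * ∑ i ∈ Finset.range n, φτ (V i ω))
      atTop (𝓝 ((∫ ω, (Y111 ω - Y100 ω) * indG G GLabel.T ω ∂P) / (P {ω | G ω = GLabel.T}).toReal)) := by
  classical
  set pT : ℝ := (P {ω | G ω = GLabel.T}).toReal with hpT_def
  have hpT0 : pT ≠ 0 := ne_of_gt hpT
  have hε0 : ε ≠ 0 := ne_of_gt hε
  have he0 : ∀ g x, 0 < e g x := fun g x => lt_of_lt_of_le hε (hpos g x)
  have hene : ∀ g x, e g x ≠ 0 := fun g x => (he0 g x).ne'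
  have hMN0 : 0 ≤ MN := le_trans (abs_nonneg _) (hMN (fun _ => 0))
  have hMC0 : 0 ≤ MC := le_trans (abs_nonneg _) (hMC (fun _ => 0))
  have hm : sigmaX X ≤ ‹MeasurableSpace Ω› := hX.comap_le
  have hXm : Measurable[sigmaX X] X := Measurable.of_comap_le le_rfl
  have hGind : ∀ g : GLabel, Measurable (fun ω => indG G g ω) := fun g =>
    (measurable_from_top (f := fun gl : GLabel => if gl = g then (1:ℝ) else 0)).comp hG
  have hindbd : ∀ g ω, |indG G g ω| ≤ 1 := by
    intro g ω; unfold indG; split <;> norm_num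
  have hind_int : ∀ g, Integrable (fun ω => indG G g ω) P := fun g =>
    (integrable_const (1:ℝ)).mono' ((hGind g).aestronglyMeasurable)
      (ae_of_all _ fun ω => by simpa using hindbd g ω)
  have hintmul : ∀ (Z : Ω → ℝ), Integrable Z P → ∀ g : GLabel,
      Integrable (fun ω => Z ω * indG G g ω) P := by
    intro Z hZ g
    have h := hZ.bdd_mul (c := 1) ((hGind g).aestronglyMeasurable)
      (ae_of_all _ fun ω => by simpa using hindbd g ω)
    exact h.congr (ae_of_all _ fun ω => mul_comm _ _)
  -- key integral identity
  have key : ∀ (h : (Fin q → ℝ) → ℝ), Measurable h → ∀ C : ℝ, (∀ x, |h x| ≤ C) →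
      ∀ (W u : Ω → ℝ), Integrable W P → (P[W | sigmaX X] =ᵐ[P] u) →
      ∫ ω, h (X ω) * W ω ∂P = ∫ ω, h (X ω) * u ω ∂P := by
    intro h hh C hC W u hW hu
    have hsm : StronglyMeasurable[sigmaX X] (fun ω => h (X ω)) := (hh.comp hXm).stronglyMeasurable
    have hmul : Integrable (fun ω => h (X ω) * W ω) P :=
      hW.bdd_mul ((hh.comp hX).aestronglyMeasurable)
        (ae_of_all _ fun ω => by simpa using hC (X ω))
    have h1 : P[(fun ω => h (X ω)) * W | sigmaX X]
        =ᵐ[P] (fun ω => h (X ω)) * P[W | sigmaX X] :=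
      condExp_mul_of_stronglyMeasurable_left hsm hmul hW
    calc ∫ ω, h (X ω) * W ω ∂P
        = ∫ ω, (P[(fun ω => h (X ω)) * W | sigmaX X]) ω ∂P := (integral_condExp hm).symm
      _ = ∫ ω, ((fun ω => h (X ω)) * P[W | sigmaX X]) ω ∂P := integral_congr_ae h1
      _ = ∫ ω, h (X ω) * u ω ∂P := integral_congr_ae (hu.mono fun ω hω => by
            simp only [Pi.mul_apply, hω])
  -- integrability of condexp-version integrands
  have int_fTe : Integrable (fun ω => fT (X ω) * e GLabel.T (X ω)) P :=
    integrable_condExp.congr hfT.2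
  have int_gTe : Integrable (fun ω => gT (X ω) * e GLabel.T (X ω)) P :=
    integrable_condExp.congr hgT.2
  have int_fNeN : Integrable (fun ω => fN (X ω) * e GLabel.N (X ω)) P :=
    integrable_condExp.congr hfN.2
  have int_gNeN : Integrable (fun ω => gN (X ω) * e GLabel.N (X ω)) P :=
    integrable_condExp.congr hgN.2
  have int_gCeC : Integrable (fun ω => gC (X ω) * e GLabel.C (X ω)) P :=
    integrable_condExp.congr hgC.2
  have hratio_bd : ∀ (g : GLabel) (x : Fin q → ℝ), |e GLabel.T x / e g x| ≤ ε⁻¹ := by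
    intro g x
    rw [abs_div, abs_of_nonneg (he0 GLabel.T x).le, abs_of_pos (he0 g x), ← one_div]
    exact div_le_div₀ zero_le_one (he1 GLabel.T x) hε (hpos g x)
  have transfer : ∀ (f : (Fin q → ℝ) → ℝ) (g : GLabel),
      Integrable (fun ω => f (X ω) * e g (X ω)) P →
      Integrable (fun ω => f (X ω) * e GLabel.T (X ω)) P := by
    intro f g hf
    have hb : Measurable (fun x => e GLabel.T x / e g x) := (he _).div (he _)
    have h := hf.bdd_mul (c := ε⁻¹) ((hb.comp hX).aestronglyMeasurable)
      (ae_of_all _ fun ω => by rw [Real.norm_eq_abs]; exact hratio_bd g (X ω))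
    exact h.congr (ae_of_all _ fun ω => by
      have hb0 := hene g (X ω); simp only [Function.comp_apply]; field_simp)
  have int_fNe : Integrable (fun ω => fN (X ω) * e GLabel.T (X ω)) P :=
    transfer fN GLabel.N int_fNeN
  have int_gNe : Integrable (fun ω => gN (X ω) * e GLabel.T (X ω)) P :=
    transfer gN GLabel.N int_gNeN
  have int_gCe : Integrable (fun ω => gC (X ω) * e GLabel.T (X ω)) P :=
    transfer gC GLabel.C int_gCeC
  -- bounded-times-eT integrability
  have int_bdd : ∀ (f : (Fin q → ℝ) → ℝ), Measurable f → ∀ M : ℝ, (∀ x, |f x| ≤ M) →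
      Integrable (fun ω => f (X ω) * e GLabel.T (X ω)) P := by
    intro f hf M hM
    refine (integrable_const M).mono'
      (((hf.comp hX).mul ((he GLabel.T).comp hX)).aestronglyMeasurable)
      (ae_of_all _ fun ω => ?_)
    rw [Real.norm_eq_abs, abs_mul]
    have hb1 : |e GLabel.T (X ω)| ≤ 1 := by
      rw [abs_of_nonneg (he0 GLabel.T (X ω)).le]; exact he1 _ _
    calc |f (X ω)| * |e GLabel.T (X ω)| ≤ M * 1 :=
          mul_le_mul (hM (X ω)) hb1 (abs_nonneg (e GLabel.T (X ω)))
            (le_trans (abs_nonneg (f (X ω))) (hM (X ω)))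
      _ = M := mul_one M
  have int_ΔμNe : Integrable (fun ω => ΔμN (X ω) * e GLabel.T (X ω)) P :=
    int_bdd ΔμN hΔμN.1 MN hMN
  have int_ΔμCe : Integrable (fun ω => ΔμC (X ω) * e GLabel.T (X ω)) P :=
    int_bdd ΔμC hΔμC.1 MC hMC
  -- decomposition of ΔY·1T
  have E1 : ∫ ω, (Y1 ω - Y0 ω) * indG G GLabel.T ω ∂P
      = (∫ ω, fT (X ω) * e GLabel.T (X ω) ∂P)
        + ((∫ ω, (Y111 ω - Y100 ω) * indG G GLabel.T ω ∂P)
          + ∫ ω, gT (X ω) * e GLabel.T (X ω) ∂P) := by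
    have hae : (fun ω => (Y1 ω - Y0 ω) * indG G GLabel.T ω) =ᵐ[P]
        (fun ω => (Y110 ω - Y111 ω) * indG G GLabel.T ω
          + ((Y111 ω - Y100 ω) * indG G GLabel.T ω
            + (Y100 ω - Y000 ω) * indG G GLabel.T ω)) := by
      filter_upwards [hconsT, hcons0] with ω h1 h2
      by_cases hg : G ω = GLabel.T
      · rw [h1 hg, h2]; ring
      · simp [indG, hg]
    have i1 : Integrable (fun ω => (Y110 ω - Y111 ω) * indG G GLabel.T ω) P :=
      hintmul _ (hI10.sub hI11) GLabel.T
    have i2 : Integrable (fun ω => (Y111 ω - Y100 ω) * indG G GLabel.T ω) P :=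
      hintmul _ (hI11.sub hI00) GLabel.T
    have i3 : Integrable (fun ω => (Y100 ω - Y000 ω) * indG G GLabel.T ω) P :=
      hintmul _ (hI00.sub hI000) GLabel.T
    have i23 : Integrable (fun ω => (Y111 ω - Y100 ω) * indG G GLabel.T ω
        + (Y100 ω - Y000 ω) * indG G GLabel.T ω) P := i2.add i3
    rw [integral_congr_ae hae, integral_add i1 i23, integral_add i2 i3]
    have e1 : ∫ ω, (Y110 ω - Y111 ω) * indG G GLabel.T ω ∂P
        = ∫ ω, fT (X ω) * e GLabel.T (X ω) ∂P := by
      have h := key (fun _ => (1:ℝ)) measurable_const 1 (fun x => by norm_num)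
        (fun ω => (Y110 ω - Y111 ω) * indG G GLabel.T ω)
        (fun ω => fT (X ω) * e GLabel.T (X ω)) (hintmul _ (hI10.sub hI11) _) hfT.2
      simpa using h
    have e2 : ∫ ω, (Y100 ω - Y000 ω) * indG G GLabel.T ω ∂P
        = ∫ ω, gT (X ω) * e GLabel.T (X ω) ∂P := by
      have h := key (fun _ => (1:ℝ)) measurable_const 1 (fun x => by norm_num)
        (fun ω => (Y100 ω - Y000 ω) * indG G GLabel.T ω)
        (fun ω => gT (X ω) * e GLabel.T (X ω)) (hintmul _ (hI00.sub hI000) _) hgT.2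
      simpa using h
    rw [e1, e2]
  -- E2 : ∫ ΔμC(X)·1T = ∫ ΔμC(X)·eT(X)
  have E2 : ∫ ω, ΔμC (X ω) * indG G GLabel.T ω ∂P
      = ∫ ω, ΔμC (X ω) * e GLabel.T (X ω) ∂P :=
    key ΔμC hΔμC.1 MC hMC _ _ (hind_int GLabel.T) (hprop GLabel.T)
  have E7 : ∫ ω, ΔμN (X ω) * indG G GLabel.T ω ∂P
      = ∫ ω, ΔμN (X ω) * e GLabel.T (X ω) ∂P :=
    key ΔμN hΔμN.1 MN hMN _ _ (hind_int GLabel.T) (hprop GLabel.T)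
  -- E3/E4 : the N-correction terms
  have E3 : ∫ ω, (e GLabel.T (X ω) / e GLabel.N (X ω)) * ((Y1 ω - Y0 ω) * indG G GLabel.N ω) ∂P
      = ∫ ω, ΔμN (X ω) * e GLabel.T (X ω) ∂P := by
    have h := key (fun x => e GLabel.T x / e GLabel.N x) ((he _).div (he _)) ε⁻¹
      (hratio_bd GLabel.N)
      (fun ω => (Y1 ω - Y0 ω) * indG G GLabel.N ω)
      (fun ω => ΔμN (X ω) * e GLabel.N (X ω)) (hintmul _ (hY1.sub hY0) _) hΔμN.2
    rw [h]
    refine integral_congr_ae (ae_of_all _ fun ω => ?_)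
    have hb0 := hene GLabel.N (X ω); field_simp
  have E4 : ∫ ω, (e GLabel.T (X ω) / e GLabel.N (X ω) * ΔμN (X ω)) * indG G GLabel.N ω ∂P
      = ∫ ω, ΔμN (X ω) * e GLabel.T (X ω) ∂P := by
    have h := key (fun x => e GLabel.T x / e GLabel.N x * ΔμN x)
      (((he _).div (he _)).mul hΔμN.1) (ε⁻¹ * MN)
      (fun x => by
        rw [abs_mul]
        exact mul_le_mul (hratio_bd GLabel.N x) (hMN x) (abs_nonneg _)
          ((abs_nonneg _).trans (hratio_bd GLabel.N x)))
      _ _ (hind_int GLabel.N) (hprop GLabel.N)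
    rw [h]
    refine integral_congr_ae (ae_of_all _ fun ω => ?_)
    have hb0 := hene GLabel.N (X ω); field_simp
  have E5 : ∫ ω, (e GLabel.T (X ω) / e GLabel.C (X ω)) * ((Y1 ω - Y0 ω) * indG G GLabel.C ω) ∂P
      = ∫ ω, ΔμC (X ω) * e GLabel.T (X ω) ∂P := by
    have h := key (fun x => e GLabel.T x / e GLabel.C x) ((he _).div (he _)) ε⁻¹
      (hratio_bd GLabel.C)
      (fun ω => (Y1 ω - Y0 ω) * indG G GLabel.C ω)
      (fun ω => ΔμC (X ω) * e GLabel.C (X ω)) (hintmul _ (hY1.sub hY0) _) hΔμC.2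
    rw [h]
    refine integral_congr_ae (ae_of_all _ fun ω => ?_)
    have hb0 := hene GLabel.C (X ω); field_simp
  have E6 : ∫ ω, (e GLabel.T (X ω) / e GLabel.C (X ω) * ΔμC (X ω)) * indG G GLabel.C ω ∂P
      = ∫ ω, ΔμC (X ω) * e GLabel.T (X ω) ∂P := by
    have h := key (fun x => e GLabel.T x / e GLabel.C x * ΔμC x)
      (((he _).div (he _)).mul hΔμC.1) (ε⁻¹ * MC)
      (fun x => by
        rw [abs_mul]
        exact mul_le_mul (hratio_bd GLabel.C x) (hMC x) (abs_nonneg _)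
          ((abs_nonneg _).trans (hratio_bd GLabel.C x)))
      _ _ (hind_int GLabel.C) (hprop GLabel.C)
    rw [h]
    refine integral_congr_ae (ae_of_all _ fun ω => ?_)
    have hb0 := hene GLabel.C (X ω); field_simp
  -- a.e. identities for ΔμN and ΔμC
  have hNae : ∀ᵐ ω ∂P, ΔμN (X ω) = fN (X ω) + gN (X ω) := by
    have h1 : (fun ω => (Y1 ω - Y0 ω) * indG G GLabel.N ω) =ᵐ[P]
        (fun ω => (Y101 ω - Y100 ω) * indG G GLabel.N ω
          + (Y100 ω - Y000 ω) * indG G GLabel.N ω) := by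
      filter_upwards [hconsN, hcons0] with ω hc1 hc2
      by_cases hg : G ω = GLabel.N
      · rw [hc1 hg, hc2]; ring
      · simp [indG, hg]
    have h2 := condExp_congr_ae (m := sigmaX X) (μ := P) h1
    have h3 : P[(fun ω => (Y101 ω - Y100 ω) * indG G GLabel.N ω
          + (Y100 ω - Y000 ω) * indG G GLabel.N ω) | sigmaX X]
        =ᵐ[P] (fun ω => fN (X ω) * e GLabel.N (X ω) + gN (X ω) * e GLabel.N (X ω)) := by
      have h4 := condExp_add (μ := P) (m := sigmaX X)
        (hintmul _ (hI01.sub hI00) GLabel.N) (hintmul _ (hI00.sub hI000) GLabel.N)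
      exact h4.trans (hfN.2.add hgN.2)
    have h5 := (hΔμN.2.symm.trans h2).trans h3
    filter_upwards [h5] with ω hω
    have h6 : ΔμN (X ω) * e GLabel.N (X ω) = (fN (X ω) + gN (X ω)) * e GLabel.N (X ω) := by
      rw [add_mul]; linarith [hω]
    exact mul_right_cancel₀ (hene GLabel.N (X ω)) h6
  have hCae : ∀ᵐ ω ∂P, ΔμC (X ω) = gC (X ω) := by
    have h1 : (fun ω => (Y1 ω - Y0 ω) * indG G GLabel.C ω) =ᵐ[P]
        (fun ω => (Y100 ω - Y000 ω) * indG G GLabel.C ω) := by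
      filter_upwards [hconsC, hcons0] with ω hc1 hc2
      by_cases hg : G ω = GLabel.C
      · rw [hc1 hg, hc2]
      · simp [indG, hg]
    have h2 := condExp_congr_ae (m := sigmaX X) (μ := P) h1
    have h5 := (hΔμC.2.symm.trans h2).trans hgC.2
    filter_upwards [h5] with ω hω
    exact mul_right_cancel₀ (hene GLabel.C (X ω)) hω
  -- E8 : ∫ ΔμN·eT = ∫ fN·eT + ∫ gC·eT
  have E8 : ∫ ω, ΔμN (X ω) * e GLabel.T (X ω) ∂P
      = (∫ ω, fN (X ω) * e GLabel.T (X ω) ∂P) + ∫ ω, gC (X ω) * e GLabel.T (X ω) ∂P := by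
    have h1 : ∫ ω, ΔμN (X ω) * e GLabel.T (X ω) ∂P
        = ∫ ω, (fN (X ω) * e GLabel.T (X ω) + gN (X ω) * e GLabel.T (X ω)) ∂P := by
      refine integral_congr_ae ?_
      filter_upwards [hNae] with ω hω
      rw [hω]; ring
    have h2 : ∫ ω, gN (X ω) * e GLabel.T (X ω) ∂P
        = ∫ ω, gC (X ω) * e GLabel.T (X ω) ∂P := by
      refine integral_congr_ae ?_
      filter_upwards [hA6] with ω hω
      rw [hω]
    rw [h1, integral_add int_fNe int_gNe, h2]
  have E9 : ∫ ω, ΔμC (X ω) * e GLabel.T (X ω) ∂P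
      = ∫ ω, gC (X ω) * e GLabel.T (X ω) ∂P := by
    refine integral_congr_ae ?_
    filter_upwards [hCae] with ω hω
    rw [hω]
  have E10 : (∫ ω, fT (X ω) * e GLabel.T (X ω) ∂P)
      + (∫ ω, fN (X ω) * e GLabel.T (X ω) ∂P) = 0 := by
    rw [← integral_add int_fTe int_fNe]
    have h1 : (fun ω => fT (X ω) * e GLabel.T (X ω) + fN (X ω) * e GLabel.T (X ω))
        =ᵐ[P] (fun _ => (0:ℝ)) := by
      filter_upwards [hA5] with ω hω
      have : (fT (X ω) + fN (X ω)) * e GLabel.T (X ω) = 0 := by rw [hω]; ring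
      linarith [this]
    rw [integral_congr_ae h1, integral_zero]
  have E11 : ∫ ω, gT (X ω) * e GLabel.T (X ω) ∂P
      = ∫ ω, gC (X ω) * e GLabel.T (X ω) ∂P := by
    refine integral_congr_ae ?_
    filter_upwards [hA4] with ω hω
    rw [hω]
  -- the five terms of φτ along the data
  set t1 : Ω → ℝ := fun ω => indG G GLabel.T ω / pT * (Y1 ω - Y0 ω - ΔμC (X ω)) with ht1
  set t2 : Ω → ℝ := fun ω => e GLabel.T (X ω) / pT
    * (indG G GLabel.N ω / e GLabel.N (X ω)) * (Y1 ω - Y0 ω - ΔμN (X ω)) with ht2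
  set t3 : Ω → ℝ := fun ω => indG G GLabel.T ω / pT * ΔμN (X ω) with ht3
  set t4 : Ω → ℝ := fun ω => e GLabel.T (X ω) / pT
    * (indG G GLabel.C ω / e GLabel.C (X ω)) * (Y1 ω - Y0 ω - ΔμC (X ω)) with ht4
  set t5 : Ω → ℝ := fun ω => indG G GLabel.T ω / pT * ΔμC (X ω) with ht5
  have hφpt : ∀ ω, φτ (Y0 ω, Y1 ω, G ω, X ω) = t1 ω + t2 ω + t3 ω - t4 ω - t5 ω := by
    intro ω
    rw [hφτ]
    simp only [ht1, ht2, ht3, ht4, ht5, indG]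
  -- integrability of the pieces appearing in the t-integrals
  have int_ΔμCind : Integrable (fun ω => ΔμC (X ω) * indG G GLabel.T ω) P :=
    hintmul _ ((integrable_const MC).mono' ((hΔμC.1.comp hX).aestronglyMeasurable)
      (ae_of_all _ fun ω => by simpa using hMC (X ω))) GLabel.T
  have int_ΔμNind : Integrable (fun ω => ΔμN (X ω) * indG G GLabel.T ω) P :=
    hintmul _ ((integrable_const MN).mono' ((hΔμN.1.comp hX).aestronglyMeasurable)
      (ae_of_all _ fun ω => by simpa using hMN (X ω))) GLabel.T
  have int_rN : Integrable (fun ω =>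
      (e GLabel.T (X ω) / e GLabel.N (X ω)) * ((Y1 ω - Y0 ω) * indG G GLabel.N ω)) P :=
    (hintmul _ (hY1.sub hY0) GLabel.N).bdd_mul
      ((((he _).div (he _)).comp hX).aestronglyMeasurable)
      (ae_of_all _ fun ω => by rw [Real.norm_eq_abs]; exact hratio_bd GLabel.N (X ω))
  have int_rC : Integrable (fun ω =>
      (e GLabel.T (X ω) / e GLabel.C (X ω)) * ((Y1 ω - Y0 ω) * indG G GLabel.C ω)) P :=
    (hintmul _ (hY1.sub hY0) GLabel.C).bdd_mul
      ((((he _).div (he _)).comp hX).aestronglyMeasurable)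
      (ae_of_all _ fun ω => by rw [Real.norm_eq_abs]; exact hratio_bd GLabel.C (X ω))
  have int_sN : Integrable (fun ω =>
      (e GLabel.T (X ω) / e GLabel.N (X ω) * ΔμN (X ω)) * indG G GLabel.N ω) P :=
    (hind_int GLabel.N).bdd_mul (c := ε⁻¹ * MN)
      (((((he _).div (he _)).mul hΔμN.1).comp hX).aestronglyMeasurable)
      (ae_of_all _ fun ω => by
        rw [Real.norm_eq_abs, abs_mul]
        exact mul_le_mul (hratio_bd GLabel.N (X ω)) (hMN (X ω)) (abs_nonneg _)
          ((abs_nonneg _).trans (hratio_bd GLabel.N (X ω))))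
  have int_sC : Integrable (fun ω =>
      (e GLabel.T (X ω) / e GLabel.C (X ω) * ΔμC (X ω)) * indG G GLabel.C ω) P :=
    (hind_int GLabel.C).bdd_mul (c := ε⁻¹ * MC)
      (((((he _).div (he _)).mul hΔμC.1).comp hX).aestronglyMeasurable)
      (ae_of_all _ fun ω => by
        rw [Real.norm_eq_abs, abs_mul]
        exact mul_le_mul (hratio_bd GLabel.C (X ω)) (hMC (X ω)) (abs_nonneg _)
          ((abs_nonneg _).trans (hratio_bd GLabel.C (X ω))))
  -- the integrals of the five terms
  have It1 : ∫ ω, t1 ω ∂P = pT⁻¹ * ((∫ ω, (Y1 ω - Y0 ω) * indG G GLabel.T ω ∂P)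
      - ∫ ω, ΔμC (X ω) * indG G GLabel.T ω ∂P) := by
    have hpt : ∀ ω, t1 ω = pT⁻¹ * ((Y1 ω - Y0 ω) * indG G GLabel.T ω
        - ΔμC (X ω) * indG G GLabel.T ω) := by
      intro ω; simp only [ht1]; ring
    have iY : Integrable (fun ω => (Y1 ω - Y0 ω) * indG G GLabel.T ω) P :=
      hintmul _ (hY1.sub hY0) GLabel.T
    rw [integral_congr_ae (ae_of_all _ hpt), integral_const_mul,
      integral_sub iY int_ΔμCind]
  have It3 : ∫ ω, t3 ω ∂P = pT⁻¹ * ∫ ω, ΔμN (X ω) * indG G GLabel.T ω ∂P := by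
    have hpt : ∀ ω, t3 ω = pT⁻¹ * (ΔμN (X ω) * indG G GLabel.T ω) := by
      intro ω; simp only [ht3]; ring
    rw [integral_congr_ae (ae_of_all _ hpt), integral_const_mul]
  have It5 : ∫ ω, t5 ω ∂P = pT⁻¹ * ∫ ω, ΔμC (X ω) * indG G GLabel.T ω ∂P := by
    have hpt : ∀ ω, t5 ω = pT⁻¹ * (ΔμC (X ω) * indG G GLabel.T ω) := by
      intro ω; simp only [ht5]; ring
    rw [integral_congr_ae (ae_of_all _ hpt), integral_const_mul]
  have It2 : ∫ ω, t2 ω ∂P = 0 := by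
    have hpt : ∀ ω, t2 ω = pT⁻¹ *
        ((e GLabel.T (X ω) / e GLabel.N (X ω)) * ((Y1 ω - Y0 ω) * indG G GLabel.N ω)
          - (e GLabel.T (X ω) / e GLabel.N (X ω) * ΔμN (X ω)) * indG G GLabel.N ω) := by
      intro ω; simp only [ht2]; ring
    rw [integral_congr_ae (ae_of_all _ hpt), integral_const_mul,
      integral_sub int_rN int_sN, E3, E4, sub_self, mul_zero]
  have It4 : ∫ ω, t4 ω ∂P = 0 := by
    have hpt : ∀ ω, t4 ω = pT⁻¹ *
        ((e GLabel.T (X ω) / e GLabel.C (X ω)) * ((Y1 ω - Y0 ω) * indG G GLabel.C ω)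
          - (e GLabel.T (X ω) / e GLabel.C (X ω) * ΔμC (X ω)) * indG G GLabel.C ω) := by
      intro ω; simp only [ht4]; ring
    rw [integral_congr_ae (ae_of_all _ hpt), integral_const_mul,
      integral_sub int_rC int_sC, E5, E6, sub_self, mul_zero]
  -- integrability of each t
  have int_t1 : Integrable t1 P :=
    ((hY1.sub hY0).sub ((integrable_const MC).mono' ((hΔμC.1.comp hX).aestronglyMeasurable)
        (ae_of_all _ fun ω => by simpa using hMC (X ω)))).bdd_mul (c := |pT⁻¹|)
      (((hGind GLabel.T).div measurable_const).aestronglyMeasurable)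
      (ae_of_all _ fun ω => by
        rw [Real.norm_eq_abs, div_eq_mul_inv, abs_mul]
        exact mul_le_mul_of_nonneg_right (hindbd GLabel.T ω) (abs_nonneg _) |>.trans
          (by rw [one_mul]))
  have int_t3 : Integrable t3 P := by
    refine (integrable_const (pT⁻¹ * MN)).mono'
      ((((hGind GLabel.T).div measurable_const).mul (hΔμN.1.comp hX)).aestronglyMeasurable)
      (ae_of_all _ fun ω => ?_)
    rw [Real.norm_eq_abs, abs_mul, abs_div, abs_of_pos hpT]
    refine mul_le_mul ?_ (hMN (X ω)) (abs_nonneg _) (by positivity)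
    rw [div_le_iff₀ hpT, inv_mul_cancel₀ hpT0]
    exact hindbd GLabel.T ω
  have int_t5 : Integrable t5 P := by
    refine (integrable_const (pT⁻¹ * MC)).mono'
      ((((hGind GLabel.T).div measurable_const).mul (hΔμC.1.comp hX)).aestronglyMeasurable)
      (ae_of_all _ fun ω => ?_)
    rw [Real.norm_eq_abs, abs_mul, abs_div, abs_of_pos hpT]
    refine mul_le_mul ?_ (hMC (X ω)) (abs_nonneg _) (by positivity)
    rw [div_le_iff₀ hpT, inv_mul_cancel₀ hpT0]
    exact hindbd GLabel.T ω
  have int_t2 : Integrable t2 P := by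
    have h : Integrable (fun ω =>
        pT⁻¹ * ((e GLabel.T (X ω) / e GLabel.N (X ω)) * ((Y1 ω - Y0 ω) * indG G GLabel.N ω))
          - pT⁻¹ * ((e GLabel.T (X ω) / e GLabel.N (X ω) * ΔμN (X ω)) * indG G GLabel.N ω)) P :=
      (int_rN.const_mul pT⁻¹).sub (int_sN.const_mul pT⁻¹)
    refine (h.congr (ae_of_all _ fun ω => ?_))
    simp only [ht2]; ring
  have int_t4 : Integrable t4 P := by
    have h : Integrable (fun ω =>
        pT⁻¹ * ((e GLabel.T (X ω) / e GLabel.C (X ω)) * ((Y1 ω - Y0 ω) * indG G GLabel.C ω))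
          - pT⁻¹ * ((e GLabel.T (X ω) / e GLabel.C (X ω) * ΔμC (X ω)) * indG G GLabel.C ω)) P :=
      (int_rC.const_mul pT⁻¹).sub (int_sC.const_mul pT⁻¹)
    refine (h.congr (ae_of_all _ fun ω => ?_))
    simp only [ht4]; ring
  -- value of the expectation of φτ along the data
  have main : ∫ ω, φτ (Y0 ω, Y1 ω, G ω, X ω) ∂P
      = (∫ ω, (Y111 ω - Y100 ω) * indG G GLabel.T ω ∂P) / pT := by
    have i12 : Integrable (fun ω => t1 ω + t2 ω) P := int_t1.add int_t2
    have i123 : Integrable (fun ω => t1 ω + t2 ω + t3 ω) P := i12.add int_t3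
    have i1234 : Integrable (fun ω => t1 ω + t2 ω + t3 ω - t4 ω) P := i123.sub int_t4
    rw [integral_congr_ae (ae_of_all _ hφpt),
      integral_sub i1234 int_t5, integral_sub i123 int_t4,
      integral_add i12 int_t3, integral_add int_t1 int_t2,
      It1, It2, It3, It4, It5, E1, E2, E7, E8, E9, E11]
    have h10 := E10
    field_simp
    linarith [h10]
  -- measurability of φτ
  have hp1 : Measurable fun p : ℝ × ℝ × GLabel × (Fin q → ℝ) => p.1 := measurable_fst
  have hp2 : Measurable fun p : ℝ × ℝ × GLabel × (Fin q → ℝ) => p.2.1 :=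
    measurable_fst.comp measurable_snd
  have hpg : Measurable fun p : ℝ × ℝ × GLabel × (Fin q → ℝ) => p.2.2.1 :=
    measurable_fst.comp (measurable_snd.comp measurable_snd)
  have hpx : Measurable fun p : ℝ × ℝ × GLabel × (Fin q → ℝ) => p.2.2.2 :=
    measurable_snd.comp (measurable_snd.comp measurable_snd)
  have hiT : ∀ g0 : GLabel, Measurable fun p : ℝ × ℝ × GLabel × (Fin q → ℝ) =>
      (if p.2.2.1 = g0 then (1:ℝ) else 0) :=
    fun g0 => (measurable_from_top (f := fun gl : GLabel => if gl = g0 then (1:ℝ) else 0)).comp hpg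
  have hφmeas : Measurable φτ := by
    have : φτ = fun p : ℝ × ℝ × GLabel × (Fin q → ℝ) =>
      ((if p.2.2.1 = GLabel.T then (1:ℝ) else 0) / pT) * (p.2.1 - p.1 - ΔμC p.2.2.2)
        + (e GLabel.T p.2.2.2 / pT) *
            ((if p.2.2.1 = GLabel.N then (1:ℝ) else 0) / e GLabel.N p.2.2.2)
            * (p.2.1 - p.1 - ΔμN p.2.2.2)
        + ((if p.2.2.1 = GLabel.T then (1:ℝ) else 0) / pT) * ΔμN p.2.2.2
        - (e GLabel.T p.2.2.2 / pT) *
            ((if p.2.2.1 = GLabel.C then (1:ℝ) else 0) / e GLabel.C p.2.2.2)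
            * (p.2.1 - p.1 - ΔμC p.2.2.2)
        - ((if p.2.2.1 = GLabel.T then (1:ℝ) else 0) / pT) * ΔμC p.2.2.2 := by
      funext p
      obtain ⟨y0, y1, g, x⟩ := p
      exact hφτ y0 y1 g x
    rw [this]
    refine Measurable.sub (Measurable.sub (Measurable.add (Measurable.add ?_ ?_) ?_) ?_) ?_
    · exact ((hiT GLabel.T).div measurable_const).mul
        ((hp2.sub hp1).sub (hΔμC.1.comp hpx))
    · exact ((((he GLabel.T).comp hpx).div measurable_const).mul
        ((hiT GLabel.N).div ((he GLabel.N).comp hpx))).mul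
        ((hp2.sub hp1).sub (hΔμN.1.comp hpx))
    · exact ((hiT GLabel.T).div measurable_const).mul (hΔμN.1.comp hpx)
    · exact ((((he GLabel.T).comp hpx).div measurable_const).mul
        ((hiT GLabel.C).div ((he GLabel.C).comp hpx))).mul
        ((hp2.sub hp1).sub (hΔμC.1.comp hpx))
    · exact ((hiT GLabel.T).div measurable_const).mul (hΔμC.1.comp hpx)
  -- uniform bound on φτ
  have bnd : ∀ (y0 y1 : ℝ) (g : GLabel) (x : Fin q → ℝ),
      |φτ (y0, y1, g, x)| ≤ pT⁻¹ * (1 + 2 / ε) * |y1 - y0|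
        + pT⁻¹ * (2 * MC + MN + (MN + MC) / ε) := by
    intro y0 y1 g x
    rw [hφτ]
    have hif : ∀ g0 : GLabel, |(if g = g0 then (1:ℝ) else 0)| ≤ 1 := by
      intro g0; split <;> norm_num
    have hdivT : ∀ g0 : GLabel, |(if g = g0 then (1:ℝ) else 0) / pT| ≤ pT⁻¹ := by
      intro g0
      rw [abs_div, abs_of_pos hpT, div_le_iff₀ hpT, inv_mul_cancel₀ hpT0]
      exact hif g0
    have heT : |e GLabel.T x / pT| ≤ pT⁻¹ := by
      rw [abs_div, abs_of_pos hpT, div_le_iff₀ hpT, inv_mul_cancel₀ hpT0,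
        abs_of_nonneg (he0 GLabel.T x).le]
      exact he1 GLabel.T x
    have hdivE : ∀ g0 g1 : GLabel, |(if g = g0 then (1:ℝ) else 0) / e g1 x| ≤ ε⁻¹ := by
      intro g0 g1
      rw [abs_div, abs_of_pos (he0 g1 x), ← one_div]
      exact div_le_div₀ zero_le_one (hif g0) hε (hpos g1 x)
    have hC1 : |y1 - y0 - ΔμC x| ≤ |y1 - y0| + MC :=
      (abs_sub _ _).trans (by gcongr; exact hMC x)
    have hN1 : |y1 - y0 - ΔμN x| ≤ |y1 - y0| + MN :=
      (abs_sub _ _).trans (by gcongr; exact hMN x)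
    have h1 : |(if g = GLabel.T then (1:ℝ) else 0) / pT * (y1 - y0 - ΔμC x)|
        ≤ pT⁻¹ * (|y1 - y0| + MC) := by
      rw [abs_mul]
      exact mul_le_mul (hdivT _) hC1 (abs_nonneg _) (inv_nonneg.mpr hpT.le)
    have h2 : |e GLabel.T x / pT * ((if g = GLabel.N then (1:ℝ) else 0) / e GLabel.N x)
          * (y1 - y0 - ΔμN x)| ≤ pT⁻¹ * ε⁻¹ * (|y1 - y0| + MN) := by
      rw [abs_mul, abs_mul]
      refine mul_le_mul (mul_le_mul heT (hdivE _ _) (abs_nonneg _)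
        (inv_nonneg.mpr hpT.le)) hN1 (abs_nonneg _) ?_
      exact mul_nonneg (inv_nonneg.mpr hpT.le) (inv_nonneg.mpr hε.le)
    have h3 : |(if g = GLabel.T then (1:ℝ) else 0) / pT * ΔμN x| ≤ pT⁻¹ * MN := by
      rw [abs_mul]
      exact mul_le_mul (hdivT _) (hMN x) (abs_nonneg _) (inv_nonneg.mpr hpT.le)
    have h4 : |e GLabel.T x / pT * ((if g = GLabel.C then (1:ℝ) else 0) / e GLabel.C x)
          * (y1 - y0 - ΔμC x)| ≤ pT⁻¹ * ε⁻¹ * (|y1 - y0| + MC) := by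
      rw [abs_mul, abs_mul]
      refine mul_le_mul (mul_le_mul heT (hdivE _ _) (abs_nonneg _)
        (inv_nonneg.mpr hpT.le)) hC1 (abs_nonneg _) ?_
      exact mul_nonneg (inv_nonneg.mpr hpT.le) (inv_nonneg.mpr hε.le)
    have h5 : |(if g = GLabel.T then (1:ℝ) else 0) / pT * ΔμC x| ≤ pT⁻¹ * MC := by
      rw [abs_mul]
      exact mul_le_mul (hdivT _) (hMC x) (abs_nonneg _) (inv_nonneg.mpr hpT.le)
    have htri : ∀ a b c d f : ℝ, |a + b + c - d - f| ≤ |a| + |b| + |c| + |d| + |f| := by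
      intro a b c d f
      calc |a + b + c - d - f| ≤ |a + b + c - d| + |f| := abs_sub _ _
        _ ≤ (|a + b + c| + |d|) + |f| := by gcongr; exact abs_sub _ _
        _ ≤ ((|a + b| + |c|) + |d|) + |f| := by gcongr; exact abs_add_le _ _
        _ ≤ (((|a| + |b|) + |c|) + |d|) + |f| := by gcongr; exact abs_add_le _ _
        _ = |a| + |b| + |c| + |d| + |f| := by ring
    refine (htri _ _ _ _ _).trans ?_
    have heq : pT⁻¹ * (|y1 - y0| + MC) + pT⁻¹ * ε⁻¹ * (|y1 - y0| + MN) + pT⁻¹ * MN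
        + pT⁻¹ * ε⁻¹ * (|y1 - y0| + MC) + pT⁻¹ * MC
        = pT⁻¹ * (1 + 2 / ε) * |y1 - y0| + pT⁻¹ * (2 * MC + MN + (MN + MC) / ε) := by
      field_simp
      ring
    linarith [h1, h2, h3, h4, h5]
  -- integrability of φτ along the data
  have hbase_aem : AEMeasurable (fun ω => (Y0 ω, Y1 ω, G ω, X ω)) P :=
    (hY0.1.aemeasurable.prodMk (hY1.1.aemeasurable.prodMk
      (hG.aemeasurable.prodMk hX.aemeasurable)))
  have hφbase_int : Integrable (fun ω => φτ (Y0 ω, Y1 ω, G ω, X ω)) P := by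
    refine Integrable.mono'
      (((hY1.sub hY0).abs.const_mul (pT⁻¹ * (1 + 2 / ε))).add
        (integrable_const (pT⁻¹ * (2 * MC + MN + (MN + MC) / ε))))
      ((hφmeas.comp_aemeasurable hbase_aem).aestronglyMeasurable)
      (ae_of_all _ fun ω => ?_)
    rw [Real.norm_eq_abs]
    exact bnd (Y0 ω) (Y1 ω) (G ω) (X ω)
  -- strong law of large numbers
  have hint0 : Integrable (fun ω => φτ (V 0 ω)) P :=
    (((hVid 0).comp hφmeas).integrable_iff).mpr hφbase_int
  have hindep' : Pairwise (Function.onFun (IndepFun · · P) fun i => fun ω => φτ (V i ω)) :=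
    fun i j hij => (hVindep.indepFun hij).comp hφmeas hφmeas
  have hident : ∀ i, IdentDistrib (fun ω => φτ (V i ω)) (fun ω => φτ (V 0 ω)) P P :=
    fun i => ((hVid i).trans (hVid 0).symm).comp hφmeas
  have hS := strong_law_ae (fun i ω => φτ (V i ω)) hint0 hindep' hident
  have hval : ∫ ω, φτ (V 0 ω) ∂P
      = (∫ ω, (Y111 ω - Y100 ω) * indG G GLabel.T ω ∂P) / pT :=
    (((hVid 0).comp hφmeas).integral_eq).trans main
  filter_upwards [hS] with ω hω
  have : P[fun ω => φτ (V 0 ω)]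
      = (∫ ω, (Y111 ω - Y100 ω) * indG G GLabel.T ω ∂P) / pT := hval
  rw [this] at hω
  simpa [smul_eq_mul] using hω
end

section
/- (Identification with multiple time periods, Section 3.2.) Let T ≥ 1 and let (Y_t)_{t = −(T−1), …, T} be integrable post- and pre-period outcomes, with matched-pair differences ΔY_{t,(T)} := Y_t − Y_{t−T} for t = 1, …, T. For each t = 1, …, T suppose there are integrable potential outcomes Y_t^{(1,0)}, Y_t^{(1,1)}, Y_t^{(0,1)}, Y_t^{(0,0)} and Y_{t−T}^{(0,0)} with consistency (Y_t = Y_t^{(1,0)} a.s. on {G=T}, Y_t = Y_t^{(0,1)} a.s. on {G=N}, Y_t = Y_t^{(0,0)} a.s. on {G=C}, Y_{t−T} = Y_{t−T}^{(0,0)} a.s.), satisfying for each t the multi-period conditional counterfactual parallel trends assumption (S7): E[Y_t^{(0,0)} − Y_{t−T}^{(0,0)} ∣ G=T, X] = E[Y_t^{(0,0)} − Y_{t−T}^{(0,0)} ∣ G=C, X] and E[Y_t^{(0,0)} − Y_{t−T}^{(0,0)} ∣ G=N, X] = E[Y_t^{(0,0)} − Y_{t−T}^{(0,0)} ∣ G=C,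 X] P-a.s., together with the t-specific counterfactual offsetting assumption E[Y_t^{(1,0)} − Y_t^{(1,1)} ∣ G=T, X] + E[Y_t^{(0,1)} − Y_t^{(0,0)} ∣ G=N, X] = 0 P-a.s. Then, for each t, E[ (1{G=T}/p_T)·(ΔY_{t,(T)} − Δμ_C^{t}(X)) ] + E[ (e_T(X)/p_T)·( 1{G=N}/e_N(X) − 1{G=C}/e_C(X) )·ΔY_{t,(T)} ] = τ_t := E[(Y_t^{(1,1)} − Y_t^{(0,0)})·1{G=T}]/p_T, where Δμ_C^{t} is a version of E[ΔY_{t,(T)} ∣ G=C, X]; consequently the time-averaged functional (1/T)·Σ_{t=1}^{T} of the left-hand sides equals the time-averaged AOTT (1/T)·Σ_{t=1}^{T} τ_t. -/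
open MeasureTheory ProbabilityTheory Filter Topology

section Aux
set_option linter.unusedSectionVars false
variable {Ω : Type} [MeasurableSpace Ω] {P : Measure Ω} [IsProbabilityMeasure P]
  {q : ℕ} {X : Ω → (Fin q → ℝ)}

lemma meas_sigmaX' {h : (Fin q → ℝ) → ℝ} (hh : Measurable h) :
    Measurable[sigmaX X] (fun ω => h (X ω)) :=
  hh.comp (Measurable.of_comap_le le_rfl)

lemma bdd_mul_int {h : Ω → ℝ} (hmeas : AEStronglyMeasurable h P) {C : ℝ}
    (hC : ∀ ω, |h ω| ≤ C) {g : Ω → ℝ} (hg : Integrable g P) :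
    Integrable (fun ω => h ω * g ω) P :=
  hg.bdd_mul (c := C) hmeas (ae_of_all _ fun ω => by simpa [Real.norm_eq_abs] using hC ω)

lemma int_mul_bdd_right {h : Ω → ℝ} (hmeas : AEStronglyMeasurable h P) {C : ℝ}
    (hC : ∀ ω, |h ω| ≤ C) {g : Ω → ℝ} (hg : Integrable g P) :
    Integrable (fun ω => g ω * h ω) P := by
  simpa [mul_comm] using bdd_mul_int hmeas hC hg

lemma tower_eq (hX : Measurable X) {W v : Ω → ℝ}
    (hv : P[W | sigmaX X] =ᵐ[P] v) : ∫ ω, W ω ∂P = ∫ ω, v ω ∂P :=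
  ((integral_condExp (μ := P) (f := W) (m := sigmaX X) hX.comap_le
    (hμm := @IsFiniteMeasure.toSigmaFinite _ _ _
      (isFiniteMeasure_trim (μ := P) (hX.comap_le : sigmaX X ≤ _)))).symm).trans (integral_congr_ae hv)

lemma pull_integral (hX : Measurable X) {h : (Fin q → ℝ) → ℝ} (hh : Measurable h)
    {W v : Ω → ℝ} (hW : Integrable W P)
    (hhW : Integrable (fun ω => h (X ω) * W ω) P)
    (hv : P[W | sigmaX X] =ᵐ[P] v) :
    ∫ ω, h (X ω) * W ω ∂P = ∫ ω, h (X ω) * v ω ∂P := by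
  have hsm : StronglyMeasurable[sigmaX X] (fun ω => h (X ω)) :=
    (meas_sigmaX' hh).stronglyMeasurable
  have h1 := condExp_mul_of_stronglyMeasurable_left (μ := P) hsm hhW hW
  have h2 : P[(fun ω => h (X ω) * W ω) | sigmaX X] =ᵐ[P] fun ω => h (X ω) * v ω :=
    h1.trans (hv.mono fun ω hω => by simp only [Pi.mul_apply, hω])
  exact tower_eq hX h2

lemma ratio_cancel {a b c : ℝ} (hb : b ≠ 0) : a / b * (c * b) = c * a := by
  field_simp

end Aux

theorem stmt_18
    {Ω : Type} [MeasurableSpace Ω] (P : Measure Ω) [IsProbabilityMeasure P]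
    {q : ℕ} (X : Ω → (Fin q → ℝ)) (hX : Measurable X)
    (G : Ω → GLabel) (hG : Measurable G)
    (e : GLabel → (Fin q → ℝ) → ℝ) (he : ∀ g, Measurable (e g))
    (he1 : ∀ g x, e g x ≤ 1)
    (hprop : ∀ g : GLabel,
      P[(fun ω => indG G g ω) | sigmaX X] =ᵐ[P] (fun ω => e g (X ω)))
    (ε : ℝ) (hε : 0 < ε) (hpos : ∀ g x, ε ≤ e g x)
    (hpT : 0 < (P {ω | G ω = GLabel.T}).toReal)
    (T : ℕ) (hT : 1 ≤ T)
    (Y : ℤ → Ω → ℝ)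
    (hYint : ∀ t ∈ Finset.Icc (1 - (T : ℤ)) (T : ℤ), Integrable (Y t) P)
    (C10 C11 C01 C00 : ℤ → Ω → ℝ)
    (hIC10 : ∀ t ∈ Finset.Icc (1 : ℤ) (T : ℤ), Integrable (C10 t) P)
    (hIC11 : ∀ t ∈ Finset.Icc (1 : ℤ) (T : ℤ), Integrable (C11 t) P)
    (hIC01 : ∀ t ∈ Finset.Icc (1 : ℤ) (T : ℤ), Integrable (C01 t) P)
    (hIC00 : ∀ t ∈ Finset.Icc (1 - (T : ℤ)) (T : ℤ), Integrable (C00 t) P)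
    (hconsT : ∀ t ∈ Finset.Icc (1 : ℤ) (T : ℤ),
      ∀ᵐ ω ∂P, G ω = GLabel.T → Y t ω = C10 t ω)
    (hconsN : ∀ t ∈ Finset.Icc (1 : ℤ) (T : ℤ),
      ∀ᵐ ω ∂P, G ω = GLabel.N → Y t ω = C01 t ω)
    (hconsC : ∀ t ∈ Finset.Icc (1 : ℤ) (T : ℤ),
      ∀ᵐ ω ∂P, G ω = GLabel.C → Y t ω = C00 t ω)
    (hcons0 : ∀ t ∈ Finset.Icc (1 - (T : ℤ)) (0 : ℤ), Y t =ᵐ[P] C00 t)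
    (gT gN gC : ℤ → (Fin q → ℝ) → ℝ)
    (hgT : ∀ t ∈ Finset.Icc (1 : ℤ) (T : ℤ),
      IsCondVersion P X G e GLabel.T (fun ω => C00 t ω - C00 (t - (T : ℤ)) ω) (gT t))
    (hgN : ∀ t ∈ Finset.Icc (1 : ℤ) (T : ℤ),
      IsCondVersion P X G e GLabel.N (fun ω => C00 t ω - C00 (t - (T : ℤ)) ω) (gN t))
    (hgC : ∀ t ∈ Finset.Icc (1 : ℤ) (T : ℤ),
      IsCondVersion P X G e GLabel.C (fun ω => C00 t ω - C00 (t - (T : ℤ)) ω) (gC t))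
    (hS7 : ∀ t ∈ Finset.Icc (1 : ℤ) (T : ℤ),
      ∀ᵐ ω ∂P, gT t (X ω) = gC t (X ω) ∧ gN t (X ω) = gC t (X ω))
    (fT fN : ℤ → (Fin q → ℝ) → ℝ)
    (hfT : ∀ t ∈ Finset.Icc (1 : ℤ) (T : ℤ),
      IsCondVersion P X G e GLabel.T (fun ω => C10 t ω - C11 t ω) (fT t))
    (hfN : ∀ t ∈ Finset.Icc (1 : ℤ) (T : ℤ),
      IsCondVersion P X G e GLabel.N (fun ω => C01 t ω - C00 t ω) (fN t))
    (hOff : ∀ t ∈ Finset.Icc (1 : ℤ) (T : ℤ),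
      ∀ᵐ ω ∂P, fT t (X ω) + fN t (X ω) = 0)
    (μC : ℤ → (Fin q → ℝ) → ℝ)
    (hμC : ∀ t ∈ Finset.Icc (1 : ℤ) (T : ℤ),
      IsCondVersion P X G e GLabel.C (fun ω => Y t ω - Y (t - (T : ℤ)) ω) (μC t))
    :
    (∀ t ∈ Finset.Icc (1 : ℤ) (T : ℤ),
        (∫ ω, (indG G GLabel.T ω / (P {ω | G ω = GLabel.T}).toReal) *
            ((Y t ω - Y (t - (T : ℤ)) ω) - μC t (X ω)) ∂P)
          + (∫ ω, (e GLabel.T (X ω) / (P {ω | G ω = GLabel.T}).toReal) *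
              (indG G GLabel.N ω / e GLabel.N (X ω) - indG G GLabel.C ω / e GLabel.C (X ω)) *
              (Y t ω - Y (t - (T : ℤ)) ω) ∂P)
          = (∫ ω, (C11 t ω - C00 t ω) * indG G GLabel.T ω ∂P) / (P {ω | G ω = GLabel.T}).toReal) ∧
      ((T : ℝ)⁻¹ * ∑ t ∈ Finset.Icc (1 : ℤ) (T : ℤ),
          ((∫ ω, (indG G GLabel.T ω / (P {ω | G ω = GLabel.T}).toReal) *
              ((Y t ω - Y (t - (T : ℤ)) ω) - μC t (X ω)) ∂P)
            + (∫ ω, (e GLabel.T (X ω) / (P {ω | G ω = GLabel.T}).toReal) *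
                (indG G GLabel.N ω / e GLabel.N (X ω) - indG G GLabel.C ω / e GLabel.C (X ω)) *
                (Y t ω - Y (t - (T : ℤ)) ω) ∂P))
        = (T : ℝ)⁻¹ * ∑ t ∈ Finset.Icc (1 : ℤ) (T : ℤ),
            (∫ ω, (C11 t ω - C00 t ω) * indG G GLabel.T ω ∂P) / (P {ω | G ω = GLabel.T}).toReal) := by
  have hepos : ∀ g x, 0 < e g x := fun g x => lt_of_lt_of_le hε (hpos g x)
  have hene : ∀ g x, e g x ≠ 0 := fun g x => ne_of_gt (hepos g x)
  -- indicator facts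
  have hindmeas : ∀ g, Measurable (indG G g) := by
    intro g
    unfold indG
    have hs : MeasurableSet ({g} : Set GLabel) := MeasurableSpace.measurableSet_top
    exact Measurable.ite (hG hs) measurable_const measurable_const
  have hindbd : ∀ g ω, |indG G g ω| ≤ 1 := by
    intro g ω; unfold indG; split <;> norm_num
  have hindint : ∀ g, Integrable (indG G g) P := by
    intro g
    simpa using bdd_mul_int ((hindmeas g).aestronglyMeasurable) (hindbd g)
      (integrable_const (1 : ℝ))
  -- bounded measurable ratios
  have hTNmeas : Measurable (fun x => e GLabel.T x / e GLabel.N x) :=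
    (he GLabel.T).div (he GLabel.N)
  have hTCmeas : Measurable (fun x => e GLabel.T x / e GLabel.C x) :=
    (he GLabel.T).div (he GLabel.C)
  have hTNX : Measurable (fun ω => e GLabel.T (X ω) / e GLabel.N (X ω)) :=
    ((he GLabel.T).comp hX).div ((he GLabel.N).comp hX)
  have hTCX : Measurable (fun ω => e GLabel.T (X ω) / e GLabel.C (X ω)) :=
    ((he GLabel.T).comp hX).div ((he GLabel.C).comp hX)
  have hinvX : Measurable (fun ω => (e GLabel.C (X ω))⁻¹) := ((he GLabel.C).comp hX).inv
  have hratio_bd : ∀ g x, |e GLabel.T x / e g x| ≤ ε⁻¹ := by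
    intro g x
    rw [abs_of_nonneg (div_nonneg (hepos GLabel.T x).le (hepos g x).le)]
    calc e GLabel.T x / e g x ≤ 1 / ε :=
          div_le_div₀ zero_le_one (he1 GLabel.T x) hε (hpos g x)
      _ = ε⁻¹ := one_div ε
  have key : ∀ t ∈ Finset.Icc (1 : ℤ) (T : ℤ),
      (∫ ω, (indG G GLabel.T ω / (P {ω | G ω = GLabel.T}).toReal) *
          ((Y t ω - Y (t - (T : ℤ)) ω) - μC t (X ω)) ∂P)
        + (∫ ω, (e GLabel.T (X ω) / (P {ω | G ω = GLabel.T}).toReal) *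
            (indG G GLabel.N ω / e GLabel.N (X ω) - indG G GLabel.C ω / e GLabel.C (X ω)) *
            (Y t ω - Y (t - (T : ℤ)) ω) ∂P)
        = (∫ ω, (C11 t ω - C00 t ω) * indG G GLabel.T ω ∂P) /
            (P {ω | G ω = GLabel.T}).toReal := by
    intro t ht
    obtain ⟨ht1, ht2⟩ := Finset.mem_Icc.mp ht
    have hT1 : (1 : ℤ) ≤ (T : ℤ) := by exact_mod_cast hT
    have htmem' : t ∈ Finset.Icc (1 - (T : ℤ)) (T : ℤ) :=
      Finset.mem_Icc.mpr ⟨by linarith, ht2⟩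
    have htT0 : t - (T : ℤ) ∈ Finset.Icc (1 - (T : ℤ)) (0 : ℤ) :=
      Finset.mem_Icc.mpr ⟨by linarith, by linarith⟩
    have htT' : t - (T : ℤ) ∈ Finset.Icc (1 - (T : ℤ)) (T : ℤ) :=
      Finset.mem_Icc.mpr ⟨by linarith, by linarith⟩
    -- integrability of raw outcomes
    have iY : Integrable (Y t) P := hYint t htmem'
    have iY' : Integrable (Y (t - (T : ℤ))) P := hYint _ htT'
    have iΔ : Integrable (fun ω => Y t ω - Y (t - (T : ℤ)) ω) P := iY.sub iY'
    have iC10 := hIC10 t ht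
    have iC11 := hIC11 t ht
    have iC01 := hIC01 t ht
    have iC00t := hIC00 t htmem'
    have iC00p := hIC00 _ htT'
    have iD00 : Integrable (fun ω => C00 t ω - C00 (t - (T : ℤ)) ω) P := iC00t.sub iC00p
    -- a.e. consistency rewrites
    have hae0 : Y (t - (T : ℤ)) =ᵐ[P] C00 (t - (T : ℤ)) := hcons0 _ htT0
    have haeT : (fun ω => (Y t ω - Y (t - (T : ℤ)) ω) * indG G GLabel.T ω) =ᵐ[P]
        (fun ω => (C10 t ω - C11 t ω) * indG G GLabel.T ω
          + (C11 t ω - C00 t ω) * indG G GLabel.T ω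
          + (C00 t ω - C00 (t - (T : ℤ)) ω) * indG G GLabel.T ω) := by
      filter_upwards [hconsT t ht, hae0] with ω h1 h2
      unfold indG
      by_cases hg : G ω = GLabel.T
      · simp only [hg, if_pos rfl]
        rw [h1 hg, h2]; ring
      · simp [hg]
    have haeN : (fun ω => (Y t ω - Y (t - (T : ℤ)) ω) * indG G GLabel.N ω) =ᵐ[P]
        (fun ω => (C01 t ω - C00 t ω) * indG G GLabel.N ω
          + (C00 t ω - C00 (t - (T : ℤ)) ω) * indG G GLabel.N ω) := by
      filter_upwards [hconsN t ht, hae0] with ω h1 h2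
      unfold indG
      by_cases hg : G ω = GLabel.N
      · simp only [hg, if_pos rfl]
        rw [h1 hg, h2]; ring
      · simp [hg]
    have haeC : (fun ω => (Y t ω - Y (t - (T : ℤ)) ω) * indG G GLabel.C ω) =ᵐ[P]
        (fun ω => (C00 t ω - C00 (t - (T : ℤ)) ω) * indG G GLabel.C ω) := by
      filter_upwards [hconsC t ht, hae0] with ω h1 h2
      unfold indG
      by_cases hg : G ω = GLabel.C
      · simp only [hg, if_pos rfl]
        rw [h1 hg, h2]
      · simp [hg]
    -- μC = gC a.e.
    have hμg : (fun ω => μC t (X ω)) =ᵐ[P] (fun ω => gC t (X ω)) := by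
      have h1 := condExp_congr_ae (m := sigmaX X) (μ := P) haeC
      have h2 : (fun ω => μC t (X ω) * e GLabel.C (X ω)) =ᵐ[P]
          (fun ω => gC t (X ω) * e GLabel.C (X ω)) :=
        (((hμC t ht).2.symm.trans h1).trans (hgC t ht).2)
      filter_upwards [h2] with ω hω
      exact mul_right_cancel₀ (hene GLabel.C (X ω)) hω
    -- integrability of μC ∘ X
    have iμe : Integrable (fun ω => μC t (X ω) * e GLabel.C (X ω)) P :=
      integrable_condExp.congr (hμC t ht).2
    have hinvbd : ∀ ω, |(e GLabel.C (X ω))⁻¹| ≤ ε⁻¹ := by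
      intro ω
      rw [abs_of_nonneg (inv_nonneg.mpr (hepos GLabel.C (X ω)).le)]
      exact inv_anti₀ hε (hpos GLabel.C (X ω))
    have iμ : Integrable (fun ω => μC t (X ω)) P := by
      have hb := bdd_mul_int (hinvX.aestronglyMeasurable) hinvbd iμe
      refine hb.congr (Eventually.of_forall fun ω => ?_)
      show (e GLabel.C (X ω))⁻¹ * (μC t (X ω) * e GLabel.C (X ω)) = μC t (X ω)
      rw [mul_comm (μC t (X ω)) (e GLabel.C (X ω)), ← mul_assoc,
        inv_mul_cancel₀ (hene GLabel.C (X ω)), one_mul]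
    -- integrability of the products with indicators
    have iWT : Integrable (fun ω => (Y t ω - Y (t - (T : ℤ)) ω) * indG G GLabel.T ω) P :=
      int_mul_bdd_right ((hindmeas GLabel.T).aestronglyMeasurable) (hindbd GLabel.T) iΔ
    have iWN : Integrable (fun ω => (Y t ω - Y (t - (T : ℤ)) ω) * indG G GLabel.N ω) P :=
      int_mul_bdd_right ((hindmeas GLabel.N).aestronglyMeasurable) (hindbd GLabel.N) iΔ
    have iWC : Integrable (fun ω => (Y t ω - Y (t - (T : ℤ)) ω) * indG G GLabel.C ω) P :=
      int_mul_bdd_right ((hindmeas GLabel.C).aestronglyMeasurable) (hindbd GLabel.C) iΔ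
    have iW1T : Integrable (fun ω => (C10 t ω - C11 t ω) * indG G GLabel.T ω) P :=
      int_mul_bdd_right ((hindmeas GLabel.T).aestronglyMeasurable) (hindbd GLabel.T)
        (iC10.sub iC11)
    have iW2T : Integrable (fun ω => (C11 t ω - C00 t ω) * indG G GLabel.T ω) P :=
      int_mul_bdd_right ((hindmeas GLabel.T).aestronglyMeasurable) (hindbd GLabel.T)
        (iC11.sub iC00t)
    have iW3T : Integrable (fun ω => (C00 t ω - C00 (t - (T : ℤ)) ω) * indG G GLabel.T ω) P :=
      int_mul_bdd_right ((hindmeas GLabel.T).aestronglyMeasurable) (hindbd GLabel.T) iD00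
    have iW1N : Integrable (fun ω => (C01 t ω - C00 t ω) * indG G GLabel.N ω) P :=
      int_mul_bdd_right ((hindmeas GLabel.N).aestronglyMeasurable) (hindbd GLabel.N)
        (iC01.sub iC00t)
    have iW2N : Integrable (fun ω => (C00 t ω - C00 (t - (T : ℤ)) ω) * indG G GLabel.N ω) P :=
      int_mul_bdd_right ((hindmeas GLabel.N).aestronglyMeasurable) (hindbd GLabel.N) iD00
    have iμT : Integrable (fun ω => μC t (X ω) * indG G GLabel.T ω) P :=
      int_mul_bdd_right ((hindmeas GLabel.T).aestronglyMeasurable) (hindbd GLabel.T) iμ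
    -- A : treated-group piece
    have KA1 : ∫ ω, (C10 t ω - C11 t ω) * indG G GLabel.T ω ∂P
        = ∫ ω, fT t (X ω) * e GLabel.T (X ω) ∂P := tower_eq hX (hfT t ht).2
    have KA3 : ∫ ω, (C00 t ω - C00 (t - (T : ℤ)) ω) * indG G GLabel.T ω ∂P
        = ∫ ω, gT t (X ω) * e GLabel.T (X ω) ∂P := tower_eq hX (hgT t ht).2
    have A : ∫ ω, (Y t ω - Y (t - (T : ℤ)) ω) * indG G GLabel.T ω ∂P
        = (∫ ω, fT t (X ω) * e GLabel.T (X ω) ∂P)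
          + (∫ ω, (C11 t ω - C00 t ω) * indG G GLabel.T ω ∂P)
          + (∫ ω, gT t (X ω) * e GLabel.T (X ω) ∂P) := by
      have iW12T : Integrable (fun ω => (C10 t ω - C11 t ω) * indG G GLabel.T ω
          + (C11 t ω - C00 t ω) * indG G GLabel.T ω) P := iW1T.add iW2T
      rw [integral_congr_ae haeT, integral_add iW12T iW3T, integral_add iW1T iW2T,
        KA1, KA3]
    -- B : conditional mean piece
    have B : ∫ ω, μC t (X ω) * indG G GLabel.T ω ∂P
        = ∫ ω, μC t (X ω) * e GLabel.T (X ω) ∂P :=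
      pull_integral hX (hμC t ht).1 (hindint GLabel.T) iμT (hprop GLabel.T)
    -- N piece
    have iP1N : Integrable (fun ω =>
        (e GLabel.T (X ω) / e GLabel.N (X ω)) * ((C01 t ω - C00 t ω) * indG G GLabel.N ω)) P :=
      bdd_mul_int (hTNX.aestronglyMeasurable) (fun ω => hratio_bd GLabel.N (X ω)) iW1N
    have iP2N : Integrable (fun ω =>
        (e GLabel.T (X ω) / e GLabel.N (X ω)) *
          ((C00 t ω - C00 (t - (T : ℤ)) ω) * indG G GLabel.N ω)) P :=
      bdd_mul_int (hTNX.aestronglyMeasurable) (fun ω => hratio_bd GLabel.N (X ω)) iW2N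
    have N1 : ∫ ω, (e GLabel.T (X ω) / e GLabel.N (X ω)) *
          ((C01 t ω - C00 t ω) * indG G GLabel.N ω) ∂P
        = ∫ ω, fN t (X ω) * e GLabel.T (X ω) ∂P := by
      rw [pull_integral hX hTNmeas iW1N iP1N (hfN t ht).2]
      refine integral_congr_ae (Eventually.of_forall fun ω => ?_)
      show e GLabel.T (X ω) / e GLabel.N (X ω) * (fN t (X ω) * e GLabel.N (X ω))
        = fN t (X ω) * e GLabel.T (X ω)
      exact ratio_cancel (hene GLabel.N (X ω))
    have N2 : ∫ ω, (e GLabel.T (X ω) / e GLabel.N (X ω)) *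
          ((C00 t ω - C00 (t - (T : ℤ)) ω) * indG G GLabel.N ω) ∂P
        = ∫ ω, gN t (X ω) * e GLabel.T (X ω) ∂P := by
      rw [pull_integral hX hTNmeas iW2N iP2N (hgN t ht).2]
      refine integral_congr_ae (Eventually.of_forall fun ω => ?_)
      show e GLabel.T (X ω) / e GLabel.N (X ω) * (gN t (X ω) * e GLabel.N (X ω))
        = gN t (X ω) * e GLabel.T (X ω)
      exact ratio_cancel (hene GLabel.N (X ω))
    have Nt : ∫ ω, (e GLabel.T (X ω) / e GLabel.N (X ω)) *
          ((Y t ω - Y (t - (T : ℤ)) ω) * indG G GLabel.N ω) ∂P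
        = (∫ ω, fN t (X ω) * e GLabel.T (X ω) ∂P)
          + (∫ ω, gN t (X ω) * e GLabel.T (X ω) ∂P) := by
      have hcongr : (fun ω => (e GLabel.T (X ω) / e GLabel.N (X ω)) *
            ((Y t ω - Y (t - (T : ℤ)) ω) * indG G GLabel.N ω)) =ᵐ[P]
          (fun ω => (e GLabel.T (X ω) / e GLabel.N (X ω)) *
              ((C01 t ω - C00 t ω) * indG G GLabel.N ω)
            + (e GLabel.T (X ω) / e GLabel.N (X ω)) *
              ((C00 t ω - C00 (t - (T : ℤ)) ω) * indG G GLabel.N ω)) := by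
        filter_upwards [haeN] with ω hω
        rw [hω]; ring
      rw [integral_congr_ae hcongr, integral_add iP1N iP2N, N1, N2]
    -- C piece
    have iPC : Integrable (fun ω =>
        (e GLabel.T (X ω) / e GLabel.C (X ω)) *
          ((Y t ω - Y (t - (T : ℤ)) ω) * indG G GLabel.C ω)) P :=
      bdd_mul_int (hTCX.aestronglyMeasurable) (fun ω => hratio_bd GLabel.C (X ω)) iWC
    have Ct : ∫ ω, (e GLabel.T (X ω) / e GLabel.C (X ω)) *
          ((Y t ω - Y (t - (T : ℤ)) ω) * indG G GLabel.C ω) ∂P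
        = ∫ ω, μC t (X ω) * e GLabel.T (X ω) ∂P := by
      rw [pull_integral hX hTCmeas iWC iPC (hμC t ht).2]
      refine integral_congr_ae (Eventually.of_forall fun ω => ?_)
      show e GLabel.T (X ω) / e GLabel.C (X ω) * (μC t (X ω) * e GLabel.C (X ω))
        = μC t (X ω) * e GLabel.T (X ω)
      exact ratio_cancel (hene GLabel.C (X ω))
    -- integrabilities of the e_T-weighted pieces
    have ifTe : Integrable (fun ω => fT t (X ω) * e GLabel.T (X ω)) P :=
      integrable_condExp.congr (hfT t ht).2
    have ifNe : Integrable (fun ω => fN t (X ω) * e GLabel.T (X ω)) P := by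
      have h0 : Integrable (fun ω => fN t (X ω) * e GLabel.N (X ω)) P :=
        integrable_condExp.congr (hfN t ht).2
      have hb := bdd_mul_int (hTNX.aestronglyMeasurable)
        (fun ω => hratio_bd GLabel.N (X ω)) h0
      refine hb.congr (Eventually.of_forall fun ω => ?_)
      show e GLabel.T (X ω) / e GLabel.N (X ω) * (fN t (X ω) * e GLabel.N (X ω))
        = fN t (X ω) * e GLabel.T (X ω)
      exact ratio_cancel (hene GLabel.N (X ω))
    -- F1, F2, F3
    have F1 : (∫ ω, fT t (X ω) * e GLabel.T (X ω) ∂P)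
        + (∫ ω, fN t (X ω) * e GLabel.T (X ω) ∂P) = 0 := by
      rw [← integral_add ifTe ifNe]
      refine integral_eq_zero_of_ae ?_
      filter_upwards [hOff t ht] with ω hω
      show fT t (X ω) * e GLabel.T (X ω) + fN t (X ω) * e GLabel.T (X ω) = 0
      rw [← add_mul, hω, zero_mul]
    have F2 : ∫ ω, gT t (X ω) * e GLabel.T (X ω) ∂P
        = ∫ ω, μC t (X ω) * e GLabel.T (X ω) ∂P := by
      refine integral_congr_ae ?_
      filter_upwards [hS7 t ht, hμg] with ω hω hμω
      rw [hω.1, hμω]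
    have F3 : ∫ ω, gN t (X ω) * e GLabel.T (X ω) ∂P
        = ∫ ω, μC t (X ω) * e GLabel.T (X ω) ∂P := by
      refine integral_congr_ae ?_
      filter_upwards [hS7 t ht, hμg] with ω hω hμω
      rw [hω.2, hμω]
    -- split the two stated integrals
    set p := (P {ω | G ω = GLabel.T}).toReal with hpdef
    have step1 : (∫ ω, (indG G GLabel.T ω / p) *
          ((Y t ω - Y (t - (T : ℤ)) ω) - μC t (X ω)) ∂P)
        = p⁻¹ * ((∫ ω, (Y t ω - Y (t - (T : ℤ)) ω) * indG G GLabel.T ω ∂P)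
            - (∫ ω, μC t (X ω) * indG G GLabel.T ω ∂P)) := by
      rw [← integral_sub iWT iμT, ← integral_const_mul]
      refine integral_congr_ae (Eventually.of_forall fun ω => ?_)
      ring
    have step2 : (∫ ω, (e GLabel.T (X ω) / p) *
          (indG G GLabel.N ω / e GLabel.N (X ω) - indG G GLabel.C ω / e GLabel.C (X ω)) *
          (Y t ω - Y (t - (T : ℤ)) ω) ∂P)
        = p⁻¹ * ((∫ ω, (e GLabel.T (X ω) / e GLabel.N (X ω)) *
              ((Y t ω - Y (t - (T : ℤ)) ω) * indG G GLabel.N ω) ∂P)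
            - (∫ ω, (e GLabel.T (X ω) / e GLabel.C (X ω)) *
              ((Y t ω - Y (t - (T : ℤ)) ω) * indG G GLabel.C ω) ∂P)) := by
      have iPN : Integrable (fun ω => (e GLabel.T (X ω) / e GLabel.N (X ω)) *
          ((Y t ω - Y (t - (T : ℤ)) ω) * indG G GLabel.N ω)) P :=
        bdd_mul_int (hTNX.aestronglyMeasurable) (fun ω => hratio_bd GLabel.N (X ω)) iWN
      rw [← integral_sub iPN iPC, ← integral_const_mul]
      refine integral_congr_ae (Eventually.of_forall fun ω => ?_)
      ring
    rw [step1, step2, A, B, Nt, Ct]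
    have hKp : (∫ ω, (C11 t ω - C00 t ω) * indG G GLabel.T ω ∂P) / p
        = p⁻¹ * (∫ ω, (C11 t ω - C00 t ω) * indG G GLabel.T ω ∂P) := by
      rw [div_eq_inv_mul]
    rw [hKp]
    linear_combination p⁻¹ * F1 + p⁻¹ * F2 + p⁻¹ * F3
  exact ⟨key, congrArg (fun s => (T : ℝ)⁻¹ * s) (Finset.sum_congr rfl key)⟩
end
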